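/- arXiv:1605.08473 — 5 statements merged into one kernel-verified Lean document; each statement's English description precedes it below -/
import Mathlib

section
/- Let R_{10} be a t×t symmetric positive definite matrix, and for permutation matrices P_2,...,P_b define f(P_2,...,P_b) = det(R_{10} + P_2^T R_{10} P_2 + ... + P_b^T R_{10} P_b). Then f is minimized when P_2 = ... = P_b = I_t, with minimum value b^t·det(R_{10}). -/
open Matrix

/-- A permutation matrix. -/
def IsPermMatrix {t : ℕ} (P : Matrix (Fin t) (Fin t) ℝ) : Prop :=
  ∃ σ : Equiv.Perm (Fin t), P = σ.permMatrix ℝ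

section Helpers

open Finset Real

/-- Conjugation of a positive definite matrix by an invertible matrix is positive definite. -/
lemma posDef_conj {n : Type*} [Fintype n] [DecidableEq n] {M N : Matrix n n ℝ}
    (hM : M.PosDef) (hN : IsUnit N) : (Nᴴ * M * N).PosDef := by
  exact hM.conjTranspose_mul_mul_same (Matrix.mulVec_injective_of_isUnit hN)

/-- Mahler-type inequality: `(1 + (∏ μ)^{1/t})^t ≤ ∏ (1 + μ i)` for positive `μ`. -/
lemma mahler_ineq {t : ℕ} (ht : t ≠ 0) {μ : Fin t → ℝ} (hμ : ∀ i, 0 < μ i) :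
    (1 + (∏ i, μ i) ^ (1 / (t : ℝ))) ^ t ≤ ∏ i, (1 + μ i) := by
  have ht' : (0:ℝ) < t := by positivity
  set r : ℝ := 1 / (t : ℝ) with hr
  have hr0 : 0 ≤ r := by positivity
  have h1μ : ∀ i, (0:ℝ) < 1 + μ i := fun i => by linarith [hμ i]
  have hA : (0:ℝ) < ∏ i, μ i := Finset.prod_pos fun i _ => hμ i
  have hC : (0:ℝ) < ∏ i, (1 + μ i) := Finset.prod_pos fun i _ => h1μ i
  have hw : ∑ _i : Fin t, r = 1 := by
    simp only [Finset.sum_const, Finset.card_univ, Fintype.card_fin, nsmul_eq_mul, hr]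
    field_simp
  have g1 := Real.geom_mean_le_arith_mean_weighted Finset.univ (fun _ => r)
      (fun i => μ i / (1 + μ i)) (fun i _ => hr0) hw
      (fun i _ => div_nonneg (hμ i).le (h1μ i).le)
  have g2 := Real.geom_mean_le_arith_mean_weighted Finset.univ (fun _ => r)
      (fun i => 1 / (1 + μ i)) (fun i _ => hr0) hw
      (fun i _ => one_div_nonneg.mpr (h1μ i).le)
  have hterm : ∀ i, r * (μ i / (1 + μ i)) + r * (1 / (1 + μ i)) = r := fun i => by
    rw [← mul_add, ← add_div, add_comm (μ i) 1, div_self (h1μ i).ne', mul_one]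
  have hsum : (∑ i, r * (μ i / (1 + μ i))) + (∑ i, r * (1 / (1 + μ i))) = 1 := by
    rw [← Finset.sum_add_distrib]
    simp_rw [hterm]
    exact hw
  have hp1 : (∏ i, (μ i / (1 + μ i)) ^ r) = (∏ i, μ i) ^ r / (∏ i, (1 + μ i)) ^ r := by
    rw [Real.finset_prod_rpow _ _ (fun i _ => div_nonneg (hμ i).le (h1μ i).le) r,
      Finset.prod_div_distrib, Real.div_rpow hA.le hC.le]
  have hp2 : (∏ i, (1 / (1 + μ i)) ^ r) = 1 / (∏ i, (1 + μ i)) ^ r := by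
    rw [Real.finset_prod_rpow _ _ (fun i _ => one_div_nonneg.mpr (h1μ i).le) r]
    simp only [one_div]
    rw [Finset.prod_inv_distrib, Real.inv_rpow hC.le]
  have key : (∏ i, μ i) ^ r + 1 ≤ (∏ i, (1 + μ i)) ^ r := by
    have hCr : (0:ℝ) < (∏ i, (1 + μ i)) ^ r := Real.rpow_pos_of_pos hC r
    have : (∏ i, μ i) ^ r / (∏ i, (1 + μ i)) ^ r + 1 / (∏ i, (1 + μ i)) ^ r ≤ 1 := by
      calc (∏ i, μ i) ^ r / (∏ i, (1 + μ i)) ^ r + 1 / (∏ i, (1 + μ i)) ^ r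
          = (∏ i, (μ i / (1 + μ i)) ^ r) + (∏ i, (1 / (1 + μ i)) ^ r) := by rw [hp1, hp2]
        _ ≤ (∑ i, r * (μ i / (1 + μ i))) + (∑ i, r * (1 / (1 + μ i))) := add_le_add g1 g2
        _ = 1 := hsum
    have := mul_le_mul_of_nonneg_right this hCr.le
    rw [add_mul, div_mul_cancel₀ _ hCr.ne', div_mul_cancel₀ _ hCr.ne', one_mul] at this
    exact this
  have h0 : (0:ℝ) ≤ 1 + (∏ i, μ i) ^ r := by positivity
  calc (1 + (∏ i, μ i) ^ r) ^ t ≤ ((∏ i, (1 + μ i)) ^ r) ^ t := by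
        apply pow_le_pow_left₀ h0 (by linarith [key])
    _ = ∏ i, (1 + μ i) := by
        rw [← Real.rpow_natCast ((∏ i, (1 + μ i)) ^ r) t, ← Real.rpow_mul hC.le, hr,
          one_div, inv_mul_cancel₀ ht'.ne', Real.rpow_one]

/-- `det (1 + C) = ∏ (1 + eigenvalues)` for a Hermitian real matrix. -/
lemma det_one_add_eq {t : ℕ} {C : Matrix (Fin t) (Fin t) ℝ} (hH : C.IsHermitian) :
    (1 + C).det = ∏ i, (1 + hH.eigenvalues i) := by
  have hU : (hH.eigenvectorUnitary : Matrix (Fin t) (Fin t) ℝ) *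
      star (hH.eigenvectorUnitary : Matrix (Fin t) (Fin t) ℝ) = 1 :=
    Matrix.mem_unitaryGroup_iff.mp hH.eigenvectorUnitary.2
  have h1 : (1 + C) = (hH.eigenvectorUnitary : Matrix (Fin t) (Fin t) ℝ) *
      diagonal (fun i => 1 + hH.eigenvalues i) *
      star (hH.eigenvectorUnitary : Matrix (Fin t) (Fin t) ℝ) := by
    conv_lhs => rw [hH.spectral_theorem]
    have : diagonal (fun i => 1 + hH.eigenvalues i)
        = 1 + diagonal (RCLike.ofReal ∘ hH.eigenvalues) := by
      rw [← Matrix.diagonal_one, Matrix.diagonal_add]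
      congr 1
    rw [this, Matrix.mul_add, Matrix.add_mul, Matrix.mul_one, hU, Unitary.conjStarAlgAut_apply]
  rw [h1, Matrix.det_mul_right_comm, hU, Matrix.one_mul, Matrix.det_diagonal]

/-- Minkowski's determinant inequality (in rpow form). -/
lemma minkowski_det {t : ℕ} (ht : t ≠ 0) {A B : Matrix (Fin t) (Fin t) ℝ}
    (hA : A.PosDef) (hB : B.PosDef) :
    A.det ^ (1 / (t : ℝ)) + B.det ^ (1 / (t : ℝ)) ≤ (A + B).det ^ (1 / (t : ℝ)) := by
  classical
  have ht' : (0:ℝ) < t := by positivity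
  set r : ℝ := 1 / (t : ℝ) with hr
  obtain ⟨S, hS, hSS⟩ : ∃ S : Matrix (Fin t) (Fin t) ℝ, S.PosSemidef ∧ S * S = A :=
    by open scoped MatrixOrder in exact ⟨CFC.sqrt A, (CFC.sqrt_nonneg A).posSemidef,
      CFC.sqrt_mul_sqrt_self A hA.posSemidef.nonneg⟩
  have hdetA : (0:ℝ) < A.det := hA.det_pos
  have hdetB : (0:ℝ) < B.det := hB.det_pos
  have hdetS : S.det * S.det = A.det := by rw [← Matrix.det_mul, hSS]
  have hSdet : IsUnit S.det := by
    rcases eq_or_ne S.det 0 with h | h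
    · rw [h, mul_zero] at hdetS; exact absurd hdetS.symm hdetA.ne'
    · exact h.isUnit
  have hSu : IsUnit S := (Matrix.isUnit_iff_isUnit_det S).mpr hSdet
  have hSinv : IsUnit S⁻¹ := Matrix.isUnit_nonsing_inv_iff.mpr hSu
  have hSherm : Sᴴ = S := hS.isHermitian
  have hSinvH : (S⁻¹)ᴴ = S⁻¹ := by rw [Matrix.conjTranspose_nonsing_inv, hSherm]
  obtain ⟨C, hCdef⟩ : ∃ C, C = (S⁻¹)ᴴ * B * S⁻¹ := ⟨_, rfl⟩
  have hC : C.PosDef := hCdef ▸ posDef_conj hB hSinv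
  have hmulinv : S * S⁻¹ = 1 := Matrix.mul_nonsing_inv S hSdet
  have hinvmul : S⁻¹ * S = 1 := Matrix.nonsing_inv_mul S hSdet
  have hAB : S * (1 + C) * S = A + B := by
    rw [Matrix.mul_add, Matrix.add_mul, Matrix.mul_one, hSS, hCdef, hSinvH]
    congr 1
    calc S * (S⁻¹ * B * S⁻¹) * S = (S * S⁻¹) * B * (S⁻¹ * S) := by
          simp only [Matrix.mul_assoc]
      _ = B := by rw [hmulinv, hinvmul, Matrix.one_mul, Matrix.mul_one]
  have hdetC : C.det = B.det / A.det := by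
    rw [hCdef, Matrix.det_mul, Matrix.det_mul, hSinvH, Matrix.det_nonsing_inv]
    field_simp [Ring.inverse_eq_inv]
    rw [← hdetS, Ring.inverse_eq_inv, inv_pow, ← sq, inv_mul_cancel₀ (pow_ne_zero 2 hSdet.ne_zero)]
  have hdetAB : (A + B).det = A.det * (1 + C).det := by
    rw [← hAB, Matrix.det_mul, Matrix.det_mul, mul_comm S.det, mul_assoc, hdetS, mul_comm]
  -- apply Mahler with the eigenvalues of C
  have heig := det_one_add_eq hC.isHermitian
  have heigpos : ∀ i, 0 < hC.isHermitian.eigenvalues i := hC.eigenvalues_pos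
  have hprod : ∏ i, hC.isHermitian.eigenvalues i = C.det := by
    have := hC.isHermitian.det_eq_prod_eigenvalues
    simpa using this.symm
  have hM : (1 + C.det ^ r) ^ t ≤ (1 + C).det := by
    rw [heig, ← hprod, hr]
    exact mahler_ineq ht heigpos
  have hCd : (0:ℝ) < C.det := hC.det_pos
  have hstep : A.det * (1 + C.det ^ r) ^ t ≤ (A + B).det := by
    rw [hdetAB]
    exact mul_le_mul_of_nonneg_left hM hdetA.le
  have hls : (0:ℝ) ≤ A.det * (1 + C.det ^ r) ^ t := by positivity
  have := Real.rpow_le_rpow hls hstep (by positivity : (0:ℝ) ≤ r)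
  calc A.det ^ r + B.det ^ r
      = A.det ^ r * (1 + C.det ^ r) := by
        rw [hdetC, Real.div_rpow hdetB.le hdetA.le, mul_add, mul_one]
        have hAr : (0:ℝ) < A.det ^ r := Real.rpow_pos_of_pos hdetA r
        field_simp
    _ = (A.det * (1 + C.det ^ r) ^ t) ^ r := by
        rw [Real.mul_rpow hdetA.le (by positivity), ← Real.rpow_natCast (1 + C.det ^ r) t,
          ← Real.rpow_mul (by positivity)]
        congr 1
        rw [hr]
        field_simp
        rw [Real.rpow_one]
    _ ≤ (A + B).det ^ r := this

/-- Minkowski for a finite sum of positive definite matrices. -/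
lemma minkowski_sum {t : ℕ} (ht : t ≠ 0) {ι : Type*} (s : Finset ι) (hs : s.Nonempty)
    (f : ι → Matrix (Fin t) (Fin t) ℝ) (hf : ∀ i ∈ s, (f i).PosDef) :
    (∑ i ∈ s, f i).PosDef ∧
      (∑ i ∈ s, (f i).det ^ (1 / (t : ℝ))) ≤ (∑ i ∈ s, f i).det ^ (1 / (t : ℝ)) := by
  classical
  induction s using Finset.cons_induction with
  | empty => exact absurd hs (by simp)
  | cons a s ha ih =>
    by_cases h : s.Nonempty
    · obtain ⟨ih1, ih2⟩ := ih h (fun i hi => hf i (Finset.mem_cons_of_mem hi))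
      have hfa := hf a (Finset.mem_cons_self a s)
      rw [Finset.sum_cons, Finset.sum_cons]
      refine ⟨hfa.add ih1, ?_⟩
      calc (f a).det ^ (1 / (t:ℝ)) + ∑ i ∈ s, (f i).det ^ (1 / (t:ℝ))
          ≤ (f a).det ^ (1 / (t:ℝ)) + (∑ i ∈ s, f i).det ^ (1 / (t:ℝ)) := by linarith
        _ ≤ (f a + ∑ i ∈ s, f i).det ^ (1 / (t:ℝ)) := minkowski_det ht hfa ih1
    · rw [Finset.not_nonempty_iff_eq_empty] at h
      subst h
      simpa using hf a (Finset.mem_cons_self a _)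

end Helpers

/-- The map (P_2,…,P_b) ↦ det(R + P_2ᵀRP_2 + ⋯ + P_bᵀRP_b) over permutation
matrices (with P_1 = I_t) is minimized when all P_j = I_t, with minimum value
b^t·det(R).  Here R is symmetric positive definite. -/
theorem stmt9 {t b : ℕ} (hb : 0 < b)
    (R : Matrix (Fin t) (Fin t) ℝ) (hR : R.PosDef)
    (P : Fin b → Matrix (Fin t) (Fin t) ℝ)
    (hP0 : ∀ j : Fin b, (j : ℕ) = 0 → P j = 1)
    (hP : ∀ j, IsPermMatrix (P j)) :
    (b : ℝ) ^ t * R.det ≤ (∑ j, (P j)ᵀ * R * P j).det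
      ∧ ((∀ j, P j = 1) → (∑ j, (P j)ᵀ * R * P j).det = (b : ℝ) ^ t * R.det) := by
  classical
  -- the equality part, which holds for any t
  have heq : (∀ j, P j = 1) → (∑ j, (P j)ᵀ * R * P j).det = (b : ℝ) ^ t * R.det := by
    intro h
    have : (∑ j : Fin b, (P j)ᵀ * R * P j) = (b : ℝ) • R := by
      simp only [h, Matrix.transpose_one, Matrix.one_mul, Matrix.mul_one]
      rw [Finset.sum_const, Finset.card_univ, Fintype.card_fin,
        ← Nat.cast_smul_eq_nsmul ℝ b R]
    rw [this, Matrix.det_smul, Fintype.card_fin]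
  refine ⟨?_, heq⟩
  rcases Nat.eq_zero_or_pos t with ht0 | htpos
  · subst ht0
    simp [Matrix.det_isEmpty]
  have ht : t ≠ 0 := htpos.ne'
  have ht' : (0:ℝ) < t := by positivity
  -- each summand is positive definite with determinant det R
  have hPD : ∀ j, ((P j)ᵀ * R * P j).PosDef := by
    intro j
    obtain ⟨σ, hσ⟩ := hP j
    have hdetP : IsUnit (P j).det := by
      rw [hσ, Matrix.det_permutation]
      rcases Int.units_eq_one_or (Equiv.Perm.sign σ) with h | h <;> rw [h] <;> simp
    have hU : IsUnit (P j) := (Matrix.isUnit_iff_isUnit_det _).mpr hdetP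
    have := posDef_conj hR hU
    rwa [Matrix.conjTranspose_eq_transpose_of_trivial] at this
  have hdet : ∀ j, ((P j)ᵀ * R * P j).det = R.det := by
    intro j
    obtain ⟨σ, hσ⟩ := hP j
    rw [Matrix.det_mul, Matrix.det_mul, Matrix.det_transpose, hσ, Matrix.det_permutation]
    rcases Int.units_eq_one_or (Equiv.Perm.sign σ) with h | h <;> rw [h] <;> push_cast <;> ring
  obtain ⟨hsumPD, hsum⟩ := minkowski_sum ht Finset.univ
    (Finset.univ_nonempty_iff.mpr ⟨⟨0, hb⟩⟩) _ (fun j _ => hPD j)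
  set r : ℝ := 1 / (t : ℝ) with hr
  have hlhs : (∑ j : Fin b, ((P j)ᵀ * R * P j).det ^ r) = (b : ℝ) * R.det ^ r := by
    simp only [hdet]
    rw [Finset.sum_const, Finset.card_univ, Fintype.card_fin, nsmul_eq_mul]
  rw [hlhs] at hsum
  have hRd : (0:ℝ) < R.det := hR.det_pos
  have hSd : (0:ℝ) < (∑ j, (P j)ᵀ * R * P j).det := hsumPD.det_pos
  have h0 : (0:ℝ) ≤ (b : ℝ) * R.det ^ r := by positivity
  have := pow_le_pow_left₀ h0 hsum t
  calc (b : ℝ) ^ t * R.det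
      = ((b : ℝ) * R.det ^ r) ^ t := by
        rw [mul_pow, ← Real.rpow_natCast (R.det ^ r) t, ← Real.rpow_mul hRd.le, hr]
        field_simp
        rw [Real.rpow_one]
    _ ≤ ((∑ j, (P j)ᵀ * R * P j).det ^ r) ^ t := this
    _ = (∑ j, (P j)ᵀ * R * P j).det := by
        rw [← Real.rpow_natCast ((∑ j, (P j)ᵀ * R * P j).det ^ r) t,
          ← Real.rpow_mul hSd.le, hr, one_div, inv_mul_cancel₀ ht'.ne', Real.rpow_one]
end

section
/- For λ ∈ (0,1) and V the t×t matrix with V_{ij} = λ^{|i−j|}, one has 1_t^T V^{-1} 1_t = (t − 2(t−1)λ + (t−2)λ²)/(1−λ²), and this quantity is strictly positive. -/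
open Matrix Finset

/-- For λ ∈ (0,1) and V the t×t matrix with V_{ij} = λ^{|i−j|},
1ᵀV⁻¹1 = (t − 2(t−1)λ + (t−2)λ²)/(1−λ²), and this quantity is strictly
positive. -/
theorem stmt12 {t : ℕ} (ht : 2 ≤ t) (lam : ℝ) (hlam : lam ∈ Set.Ioo (0 : ℝ) 1)
    (V : Matrix (Fin t) (Fin t) ℝ)
    (hV : ∀ i j, V i j = lam ^ (((i : ℤ) - (j : ℤ)).natAbs)) :
    (fun _ => (1 : ℝ)) ⬝ᵥ (V⁻¹ *ᵥ fun _ => (1 : ℝ))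
        = ((t : ℝ) - 2 * ((t : ℝ) - 1) * lam + ((t : ℝ) - 2) * lam ^ 2) / (1 - lam ^ 2)
      ∧ 0 < ((t : ℝ) - 2 * ((t : ℝ) - 1) * lam + ((t : ℝ) - 2) * lam ^ 2) / (1 - lam ^ 2) := by
  obtain ⟨h0, h1⟩ := hlam
  have hD : (1 : ℝ) - lam ^ 2 ≠ 0 := by nlinarith
  -- numerator function of the tridiagonal inverse
  set bnum : ℕ → ℕ → ℝ := fun I k =>
    (if k = I then 1 + lam ^ 2 - (if I = 0 ∨ I = t - 1 then lam ^ 2 else 0) else 0)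
    + (if k + 1 = I then -lam else 0)
    + (if I + 1 = k then -lam else 0) with hbnum
  set B : Matrix (Fin t) (Fin t) ℝ := fun i j => bnum (i : ℕ) (j : ℕ) / (1 - lam ^ 2) with hB
  -- key sum identity
  have key : ∀ I J : ℕ, I < t → J < t →
      ∑ k ∈ range t, bnum I k * lam ^ (((k : ℤ) - (J : ℤ)).natAbs)
        = (if I = J then 1 - lam ^ 2 else 0) := by
    intro I J hI hJ
    simp only [hbnum, add_mul, ite_mul, zero_mul]
    rw [Finset.sum_add_distrib, Finset.sum_add_distrib]
    rw [Finset.sum_ite_eq' (range t) I]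
    have hS3 : ∀ k, (if I + 1 = k then -lam * lam ^ (((k : ℤ) - (J : ℤ)).natAbs) else 0)
        = (if k = I + 1 then -lam * lam ^ (((k : ℤ) - (J : ℤ)).natAbs) else 0) := by
      intro k; exact if_congr eq_comm rfl rfl
    simp only [neg_mul] at hS3 ⊢
    rw [Finset.sum_congr rfl (fun k _ => hS3 k), Finset.sum_ite_eq' (range t) (I + 1)]
    rcases Nat.eq_zero_or_pos I with hI0 | hIpos
    · -- I = 0
      subst hI0
      have h2 : ∀ k ∈ range t, (if k + 1 = 0 then -(lam * lam ^ (((k : ℤ) - (J : ℤ)).natAbs)) else 0) = 0 := by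
        intro k _; simp
      rw [Finset.sum_congr rfl h2, Finset.sum_const_zero]
      have hmem : (0 : ℕ) ∈ range t := by simp; omega
      have hmem1 : (1 : ℕ) ∈ range t := by simp; omega
      simp only [hmem, hmem1, if_true, if_pos (Or.inl rfl)]
      rcases Nat.eq_zero_or_pos J with hJ0 | hJpos
      · subst hJ0
        have e0 : (((0 : ℕ) : ℤ) - ((0 : ℕ) : ℤ)).natAbs = 0 := by omega
        have e1 : (((1 : ℕ) : ℤ) - ((0 : ℕ) : ℤ)).natAbs = 1 := by omega
        rw [e0, e1]; norm_num; ring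
      · obtain ⟨d, rfl⟩ : ∃ d, J = d + 1 := ⟨J - 1, by omega⟩
        have e0 : (((0 : ℕ) : ℤ) - ((d + 1 : ℕ) : ℤ)).natAbs = d + 1 := by omega
        have e1 : (((1 : ℕ) : ℤ) - ((d + 1 : ℕ) : ℤ)).natAbs = d := by omega
        rw [e0, e1]
        have : (0 : ℕ) ≠ d + 1 := by omega
        simp only [this, if_false, true_or, if_true]
        ring
    · -- I ≥ 1
      obtain ⟨c, rfl⟩ : ∃ c, I = c + 1 := ⟨I - 1, by omega⟩
      have h2 : ∀ k, (if k + 1 = c + 1 then -(lam * lam ^ (((k : ℤ) - (J : ℤ)).natAbs)) else 0)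
          = (if k = c then -(lam * lam ^ (((k : ℤ) - (J : ℤ)).natAbs)) else 0) := by
        intro k; by_cases h : k = c <;> simp [h] <;> omega
      rw [Finset.sum_congr rfl (fun k _ => h2 k), Finset.sum_ite_eq' (range t) c]
      have hmemI : (c + 1 : ℕ) ∈ range t := by simp; omega
      have hmemc : (c : ℕ) ∈ range t := by simp; omega
      simp only [hmemI, hmemc, if_true]
      by_cases hlast : c + 1 = t - 1
      · -- last row
        have hmem2 : (c + 1 + 1 : ℕ) ∈ range t ↔ False := by simp; omega
        simp only [hmem2, if_false, if_pos (Or.inr hlast)]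
        rcases lt_or_ge J (c + 1) with hJlt | hJge
        · obtain ⟨d, hd⟩ : ∃ d, c = J + d := ⟨c - J, by omega⟩
          have e0 : (((c + 1 : ℕ) : ℤ) - ((J : ℕ) : ℤ)).natAbs = d + 1 := by omega
          have e1 : (((c : ℕ) : ℤ) - ((J : ℕ) : ℤ)).natAbs = d := by omega
          rw [e0, e1]
          have : c + 1 ≠ J := by omega
          simp only [this, if_false]
          ring
        · have hJeq : J = c + 1 := by omega
          subst hJeq
          have e0 : (((c + 1 : ℕ) : ℤ) - ((c + 1 : ℕ) : ℤ)).natAbs = 0 := by omega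
          have e1 : (((c : ℕ) : ℤ) - ((c + 1 : ℕ) : ℤ)).natAbs = 1 := by omega
          rw [e0, e1]; simp; ring
      · -- interior row
        have hmem2 : (c + 1 + 1 : ℕ) ∈ range t := by simp; omega
        have hedge : ¬(c + 1 = 0 ∨ c + 1 = t - 1) := by omega
        simp only [hmem2, if_true, hedge, if_false]
        rcases lt_trichotomy J (c + 1) with hJlt | hJeq | hJgt
        · obtain ⟨d, hd⟩ : ∃ d, c = J + d := ⟨c - J, by omega⟩
          have e0 : (((c + 1 : ℕ) : ℤ) - ((J : ℕ) : ℤ)).natAbs = d + 1 := by omega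
          have e1 : (((c : ℕ) : ℤ) - ((J : ℕ) : ℤ)).natAbs = d := by omega
          have e2 : (((c + 1 + 1 : ℕ) : ℤ) - ((J : ℕ) : ℤ)).natAbs = d + 2 := by omega
          rw [e0, e1, e2]
          have : c + 1 ≠ J := by omega
          simp only [this, if_false]
          ring
        · subst hJeq
          have e0 : (((c + 1 : ℕ) : ℤ) - ((c + 1 : ℕ) : ℤ)).natAbs = 0 := by omega
          have e1 : (((c : ℕ) : ℤ) - ((c + 1 : ℕ) : ℤ)).natAbs = 1 := by omega
          have e2 : (((c + 1 + 1 : ℕ) : ℤ) - ((c + 1 : ℕ) : ℤ)).natAbs = 1 := by omega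
          rw [e0, e1, e2]; simp; ring
        · obtain ⟨d, hd⟩ : ∃ d, J = c + 1 + d + 1 := ⟨J - c - 2, by omega⟩
          have e0 : (((c + 1 : ℕ) : ℤ) - ((J : ℕ) : ℤ)).natAbs = d + 1 := by omega
          have e1 : (((c : ℕ) : ℤ) - ((J : ℕ) : ℤ)).natAbs = d + 2 := by omega
          have e2 : (((c + 1 + 1 : ℕ) : ℤ) - ((J : ℕ) : ℤ)).natAbs = d := by omega
          rw [e0, e1, e2]
          have : c + 1 ≠ J := by omega
          simp only [this, if_false]
          ring
  -- B * V = 1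
  have hBV : B * V = 1 := by
    ext i j
    rw [Matrix.mul_apply, Matrix.one_apply]
    have hs : ∀ k : Fin t, B i k * V k j
        = (fun k : ℕ => bnum (i : ℕ) k * lam ^ (((k : ℤ) - ((j : ℕ) : ℤ)).natAbs) / (1 - lam ^ 2)) (k : ℕ) := by
      intro k
      rw [hB, hV]
      push_cast
      ring
    have hcast : ∑ k : Fin t, B i k * V k j
        = ∑ k ∈ range t, (fun k : ℕ => bnum (i : ℕ) k * lam ^ (((k : ℤ) - ((j : ℕ) : ℤ)).natAbs) / (1 - lam ^ 2)) k := by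
      rw [← Fin.sum_univ_eq_sum_range]
      exact Finset.sum_congr rfl (fun k _ => hs k)
    rw [hcast]
    simp only
    rw [← Finset.sum_div, key (i : ℕ) (j : ℕ) i.isLt j.isLt]
    by_cases hij : i = j
    · simp [hij, hD]
    · have : (i : ℕ) ≠ (j : ℕ) := fun h => hij (Fin.ext h)
      simp [hij, this]
  have hVinv : V⁻¹ = B := Matrix.inv_eq_left_inv hBV
  have hT : (2 : ℝ) ≤ (t : ℝ) := by exact_mod_cast ht
  constructor
  · rw [hVinv]
    have hd : (fun _ => (1 : ℝ)) ⬝ᵥ (B *ᵥ fun _ => (1 : ℝ))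
        = ∑ i : Fin t, ∑ j : Fin t, B i j := by
      simp [dotProduct, mulVec]
    rw [hd]
    -- row sums
    have row : ∀ i : Fin t, ∑ j : Fin t, B i j
        = ((1 + lam ^ 2 - (if (i : ℕ) = 0 ∨ (i : ℕ) = t - 1 then lam ^ 2 else 0))
           + (if (i : ℕ) = 0 then 0 else -lam)
           + (if (i : ℕ) = t - 1 then 0 else -lam)) / (1 - lam ^ 2) := by
      intro i
      have hcast : ∑ j : Fin t, B i j
          = ∑ k ∈ range t, (fun k : ℕ => bnum (i : ℕ) k / (1 - lam ^ 2)) k := by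
        rw [← Fin.sum_univ_eq_sum_range]
      rw [hcast]
      simp only
      rw [← Finset.sum_div]
      congr 1
      simp only [hbnum]
      rw [Finset.sum_add_distrib, Finset.sum_add_distrib]
      rw [Finset.sum_ite_eq' (range t) (i : ℕ)]
      have hmemI : (i : ℕ) ∈ range t := by simp
      have hS3 : ∀ k, (if (i : ℕ) + 1 = k then -lam else 0)
          = (if k = (i : ℕ) + 1 then -lam else 0) := by
        intro k; exact if_congr eq_comm rfl rfl
      rw [Finset.sum_congr rfl (fun k _ => hS3 k), Finset.sum_ite_eq' (range t) ((i : ℕ) + 1)]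
      simp only [hmemI, if_true]
      congr 1
      · congr 1
        rcases Nat.eq_zero_or_pos (i : ℕ) with hI0 | hIpos
        · rw [hI0]
          have h2 : ∀ k ∈ range t, (if k + 1 = 0 then -lam else 0) = 0 := by
            intro k _; simp
          rw [Finset.sum_congr rfl h2, Finset.sum_const_zero]; simp
        · obtain ⟨c, hc⟩ : ∃ c, (i : ℕ) = c + 1 := ⟨(i : ℕ) - 1, by omega⟩
          rw [hc]
          have h2 : ∀ k, (if k + 1 = c + 1 then -lam else 0) = (if k = c then -lam else 0) := by
            intro k; by_cases h : k = c <;> simp [h] <;> omega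
          rw [Finset.sum_congr rfl (fun k _ => h2 k), Finset.sum_ite_eq' (range t) c]
          have : c ∈ range t := by have := i.isLt; simp; omega
          simp [this]
      · have hlt := i.isLt
        by_cases hlast : (i : ℕ) = t - 1
        · simp only [hlast, if_pos rfl]
          have : ¬(t - 1 + 1 ∈ range t) := by simp; omega
          rw [if_neg this]
          simp
        · have h2 : (i : ℕ) + 1 ∈ range t := by simp; omega
          rw [if_pos h2, if_neg hlast]
    rw [Finset.sum_congr rfl (fun i _ => row i)]
    -- now sum over i
    have hsplit : ∀ i : Fin t,
        ((1 + lam ^ 2 - (if (i : ℕ) = 0 ∨ (i : ℕ) = t - 1 then lam ^ 2 else 0))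
           + (if (i : ℕ) = 0 then 0 else -lam)
           + (if (i : ℕ) = t - 1 then 0 else -lam)) / (1 - lam ^ 2)
        = (fun I : ℕ => ((1 + lam ^ 2 - 2 * lam)
            - (if I = 0 then lam ^ 2 - lam else 0)
            - (if I = t - 1 then lam ^ 2 - lam else 0)) / (1 - lam ^ 2)) (i : ℕ) := by
      intro i
      have h01 : (0 : ℕ) ≠ t - 1 := by omega
      congr 1
      by_cases hi0 : (i : ℕ) = 0
      · have : ¬((i : ℕ) = t - 1) := by omega
        simp [hi0, this, h01]; ring
      · by_cases hil : (i : ℕ) = t - 1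
        · have ht1 : t - 1 ≠ 0 := by omega
          simp [hi0, hil, ht1]; ring
        · simp [hi0, hil]; ring
    have hcast2 : ∑ i : Fin t, ((1 + lam ^ 2 - (if (i : ℕ) = 0 ∨ (i : ℕ) = t - 1 then lam ^ 2 else 0))
           + (if (i : ℕ) = 0 then 0 else -lam)
           + (if (i : ℕ) = t - 1 then 0 else -lam)) / (1 - lam ^ 2)
        = ∑ I ∈ range t, (fun I : ℕ => ((1 + lam ^ 2 - 2 * lam)
            - (if I = 0 then lam ^ 2 - lam else 0)
            - (if I = t - 1 then lam ^ 2 - lam else 0)) / (1 - lam ^ 2)) I := by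
      rw [← Fin.sum_univ_eq_sum_range]
      exact Finset.sum_congr rfl (fun i _ => hsplit i)
    rw [hcast2]
    simp only
    rw [← Finset.sum_div]
    have hsum : ∑ I ∈ range t, ((1 + lam ^ 2 - 2 * lam)
            - (if I = 0 then lam ^ 2 - lam else 0)
            - (if I = t - 1 then lam ^ 2 - lam else 0))
        = (t : ℝ) * (1 + lam ^ 2 - 2 * lam) - 2 * (lam ^ 2 - lam) := by
      rw [Finset.sum_sub_distrib, Finset.sum_sub_distrib, Finset.sum_const,
        Finset.sum_ite_eq' (range t) 0, Finset.sum_ite_eq' (range t) (t - 1)]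
      have m0 : (0 : ℕ) ∈ range t := by simp; omega
      have m1 : (t - 1 : ℕ) ∈ range t := by simp; omega
      simp [m0, m1, Finset.card_range]
      ring
    rw [hsum]
    congr 1
    ring
  · apply div_pos
    · nlinarith [mul_pos (sub_pos.mpr h1) (sub_pos.mpr h1)]
    · nlinarith
end

section
/- For symmetric positive definite t×t matrices A and B with equal determinants and A ≠ B, det(A + B) > 2^t·det(A). -/
open Matrix

/-- Scalar core: if positive reals multiply to 1 and are not all 1,
then ∏ (1 + μ i) > 2^t. -/
lemma stmt14_scalar {t : ℕ} (μ : Fin t → ℝ) (hpos : ∀ i, 0 < μ i)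
    (hprod : ∏ i, μ i = 1) (i₀ : Fin t) (hi₀ : μ i₀ ≠ 1) :
    (2 : ℝ) ^ t < ∏ i, (1 + μ i) := by
  have hsq : ∀ i, Real.sqrt (μ i) ^ 2 = μ i := fun i => Real.sq_sqrt (hpos i).le
  have hle : ∀ i ∈ Finset.univ, 2 * Real.sqrt (μ i) ≤ 1 + μ i := by
    intro i _
    nlinarith [hsq i, sq_nonneg (Real.sqrt (μ i) - 1)]
  have hs1 : Real.sqrt (μ i₀) ≠ 1 := by
    intro h
    exact hi₀ (by rw [← hsq i₀, h]; norm_num)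
  have hlt : 2 * Real.sqrt (μ i₀) < 1 + μ i₀ := by
    have h0 : Real.sqrt (μ i₀) - 1 ≠ 0 := sub_ne_zero.mpr hs1
    nlinarith [hsq i₀, sq_pos_iff.mpr h0]
  have hposf : ∀ i ∈ Finset.univ, 0 < 2 * Real.sqrt (μ i) := by
    intro i _
    have := Real.sqrt_pos.mpr (hpos i)
    linarith
  have key : ∏ i, (2 * Real.sqrt (μ i)) < ∏ i, (1 + μ i) := by
    exact Finset.prod_lt_prod hposf hle ⟨i₀, Finset.mem_univ _, hlt⟩
  have hsqrtprod : ∏ i, Real.sqrt (μ i) = 1 := by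
    have h2 : (∏ i, Real.sqrt (μ i)) ^ 2 = ∏ i, μ i := by
      rw [← Finset.prod_pow]
      exact Finset.prod_congr rfl fun i _ => hsq i
    have hnn : 0 ≤ ∏ i, Real.sqrt (μ i) :=
      Finset.prod_nonneg fun i _ => Real.sqrt_nonneg _
    rw [← Real.sqrt_sq hnn, h2, hprod, Real.sqrt_one]
  calc (2 : ℝ) ^ t = ∏ i : Fin t, (2 * Real.sqrt (μ i)) := by
        rw [Finset.prod_mul_distrib, hsqrtprod, mul_one, Finset.prod_const,
          Finset.card_univ, Fintype.card_fin]
    _ < ∏ i, (1 + μ i) := key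

/-- Strict Minkowski determinant inequality consequence: for symmetric
positive definite matrices A, B with det(A) = det(B) and A ≠ B,
det(A + B) > 2^t·det(A). -/
theorem stmt14 {t : ℕ} (A B : Matrix (Fin t) (Fin t) ℝ)
    (hA : A.PosDef) (hB : B.PosDef) (hdet : A.det = B.det) (hne : A ≠ B) :
    (2 : ℝ) ^ t * A.det < (A + B).det := by
  classical
  open scoped MatrixOrder in
  have hAnn : (0 : Matrix (Fin t) (Fin t) ℝ) ≤ A := nonneg_iff_posSemidef.mpr hA.posSemidef
  open scoped MatrixOrder in
  set S := CFC.sqrt A with hSdef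
  open scoped MatrixOrder in
  have hSS : S * S = A := CFC.sqrt_mul_sqrt_self A hAnn
  open scoped MatrixOrder in
  have hSherm : S.IsHermitian := (nonneg_iff_posSemidef.mp (CFC.sqrt_nonneg A)).1
  have hdetA : 0 < A.det := hA.det_pos
  have hdS : S.det * S.det = A.det := by rw [← det_mul, hSS]
  have hdSne : S.det ≠ 0 := by
    intro h
    rw [h, mul_zero] at hdS
    exact hdetA.ne' hdS.symm
  have hdSU : IsUnit S.det := hdSne.isUnit
  have hSinv : S * S⁻¹ = 1 := mul_nonsing_inv S hdSU
  have hSinv' : S⁻¹ * S = 1 := nonsing_inv_mul S hdSU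
  have hSinvherm : (S⁻¹)ᴴ = S⁻¹ := by
    rw [conjTranspose_nonsing_inv, hSherm.eq]
  set C := S⁻¹ * B * S⁻¹ with hCdef
  have hCps : C.PosSemidef := by
    have := hB.posSemidef.conjTranspose_mul_mul_same S⁻¹
    rwa [hSinvherm] at this
  have hC := hCps.1
  have hBSCS : S * C * S = B := by
    rw [hCdef]
    calc S * (S⁻¹ * B * S⁻¹) * S = (S * S⁻¹) * B * (S⁻¹ * S) := by
          simp only [Matrix.mul_assoc]
      _ = B := by rw [hSinv, hSinv', Matrix.one_mul, Matrix.mul_one]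
  have hABS : S * (1 + C) * S = A + B := by
    rw [Matrix.mul_add, Matrix.add_mul, Matrix.mul_one, hSS, hBSCS]
  -- determinant of C is 1
  have hdetC : C.det = 1 := by
    have h1 : C.det = S⁻¹.det * B.det * S⁻¹.det := by rw [hCdef, det_mul, det_mul]
    have hinv : S.det * S⁻¹.det = 1 := by rw [← det_mul, hSinv, det_one]
    rw [h1, ← hdet, ← hdS]
    linear_combination (S.det * S⁻¹.det + 1) * hinv
  -- eigenvalues
  set μ := hC.eigenvalues with hμdef
  set U : Matrix (Fin t) (Fin t) ℝ := (hC.eigenvectorUnitary : Matrix (Fin t) (Fin t) ℝ) with hUdef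
  have hspec : C = U * diagonal (RCLike.ofReal ∘ μ) * star U := hC.spectral_theorem
  have hUU : U * star U = 1 := (Matrix.mem_unitaryGroup_iff).mp hC.eigenvectorUnitary.2
  have hdiag : diagonal (RCLike.ofReal ∘ μ) = diagonal μ := by
    congr 1
  have hμpos : ∀ i, 0 < μ i := by
    intro i
    rcases lt_or_eq_of_le (hCps.eigenvalues_nonneg i) with h | h
    · exact h
    · exfalso
      have : C.det = ∏ i, (μ i : ℝ) := hC.det_eq_prod_eigenvalues
      rw [hdetC] at this
      have : ∏ i, μ i ≠ 0 := by
        intro h0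
        rw [← this] at h0; norm_num at h0
      exact this (Finset.prod_eq_zero (Finset.mem_univ i) h.symm) |>.elim
  have hprodμ : ∏ i, μ i = 1 := by
    have : C.det = ∏ i, (μ i : ℝ) := hC.det_eq_prod_eigenvalues
    rw [hdetC] at this
    exact this.symm
  -- not all eigenvalues are 1
  have hex : ∃ i, μ i ≠ 1 := by
    by_contra h
    push_neg at h
    have hCone : C = 1 := by
      rw [hspec, hdiag]
      have : (diagonal μ : Matrix (Fin t) (Fin t) ℝ) = 1 := by
        rw [show μ = fun _ => (1:ℝ) from funext h, diagonal_one]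
      rw [this, Matrix.mul_one, hUU]
    apply hne
    rw [← hSS, ← hBSCS, hCone, Matrix.mul_one]
  obtain ⟨i₀, hi₀⟩ := hex
  -- det(A+B) = det A * ∏ (1 + μ i)
  have honeC : (1 : Matrix (Fin t) (Fin t) ℝ) + C = U * diagonal (fun i => 1 + μ i) * star U := by
    have h1 : (diagonal (fun i => 1 + μ i) : Matrix (Fin t) (Fin t) ℝ)
        = 1 + diagonal μ := by
      rw [← diagonal_one, diagonal_add]
    rw [h1, Matrix.mul_add, Matrix.add_mul, Matrix.mul_one, hUU, ← hdiag, ← hspec]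
  have hdet1C : (1 + C).det = ∏ i, (1 + μ i) := by
    rw [honeC, det_mul, det_mul, det_diagonal]
    have : U.det * (star U).det = 1 := by rw [← det_mul, hUU, det_one]
    calc U.det * (∏ i, (1 + μ i)) * (star U).det
        = (U.det * (star U).det) * ∏ i, (1 + μ i) := by ring
      _ = ∏ i, (1 + μ i) := by rw [this, one_mul]
  have hdetAB : (A + B).det = A.det * ∏ i, (1 + μ i) := by
    rw [← hABS, det_mul, det_mul, hdet1C]
    calc S.det * (∏ i, (1 + μ i)) * S.det
        = (S.det * S.det) * ∏ i, (1 + μ i) := by ring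
      _ = A.det * ∏ i, (1 + μ i) := by rw [hdS]
  have hkey := stmt14_scalar μ hμpos hprodμ i₀ hi₀
  rw [hdetAB, mul_comm ((2:ℝ)^t) A.det]
  exact mul_lt_mul_of_pos_left hkey hdetA
end

section
/- Let V be the t×t AR(1)-type correlation matrix V_{ij} = λ^{|i−j|} with λ ∈ (0,1), t > 3, and let P be a permutation matrix of the form 1 ⊕ Q ⊕ 1 with P ≠ I_t. Then det((V^{-1} + P^T V^{-1} P)^{-1}) < det(V)/2^t. -/
open Matrix Finset



/-- conj transpose = transpose over ℝ -/
lemma ctr {n : ℕ} (C : Matrix (Fin n) (Fin n) ℝ) : Cᴴ = Cᵀ := by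
  ext i j; simp [conjTranspose_apply]

/-- conjugation of a PosDef matrix by an invertible matrix is PosDef -/
lemma posDef_conj_s15 {n : ℕ} {A : Matrix (Fin n) (Fin n) ℝ} (hA : A.PosDef)
    {C : Matrix (Fin n) (Fin n) ℝ} (hC : IsUnit C.det) : (Cᵀ * A * C).PosDef := by
  have hps : (Cᵀ * A * C).PosSemidef := ctr C ▸ hA.posSemidef.conjTranspose_mul_mul_same C
  refine Matrix.PosDef.of_dotProduct_mulVec_pos hps.isHermitian fun x hx => ?_
  have hinj : Function.Injective C.mulVec := Matrix.mulVec_injective_iff_isUnit.mpr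
    ((Matrix.isUnit_iff_isUnit_det C).mpr hC)
  have hy : C *ᵥ x ≠ 0 := fun h => hx (hinj (by simpa using h))
  have key : star x ⬝ᵥ (Cᵀ * A * C) *ᵥ x = star (C *ᵥ x) ⬝ᵥ A *ᵥ (C *ᵥ x) := by
    rw [star_trivial, star_trivial, ← mulVec_mulVec, ← mulVec_mulVec,
      dotProduct_mulVec x Cᵀ, ← transpose_transpose C, vecMul_transpose, transpose_transpose]
  rw [key]
  exact hA.dotProduct_mulVec_pos hy


/-- det (1 + M) = ∏ (1 + eigenvalues) for a real hermitian matrix. -/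
lemma det_one_add {n : ℕ} {M : Matrix (Fin n) (Fin n) ℝ} (hM : M.IsHermitian) :
    (1 + M).det = ∏ i, (1 + hM.eigenvalues i) := by
  set U : Matrix (Fin n) (Fin n) ℝ := (hM.eigenvectorUnitary : Matrix (Fin n) (Fin n) ℝ) with hU
  have hUU : U * star U = 1 := (Matrix.mem_unitaryGroup_iff).mp hM.eigenvectorUnitary.2
  set D : Matrix (Fin n) (Fin n) ℝ := diagonal (RCLike.ofReal ∘ hM.eigenvalues) with hD
  have h1 : (1 : Matrix (Fin n) (Fin n) ℝ) + M = U * (1 + D) * star U := by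
    conv_lhs => rw [hM.spectral_theorem, Unitary.conjStarAlgAut_apply]
    rw [Matrix.mul_add, Matrix.add_mul, Matrix.mul_one, hUU]
  have h2 : U.det * (1 + D).det * (star U).det = (star U * U).det * (1 + D).det := by
    rw [Matrix.det_mul]; ring
  rw [h1, Matrix.det_mul, Matrix.det_mul, h2,
    Matrix.mem_unitaryGroup_iff'.mp hM.eigenvectorUnitary.2, det_one, one_mul, hD,
    ← diagonal_one, diagonal_add, det_diagonal]
  simp

/-- if all eigenvalues are 1 then M = 1 -/
lemma eq_one_of_eig {n : ℕ} {M : Matrix (Fin n) (Fin n) ℝ} (hM : M.IsHermitian)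
    (h : ∀ i, hM.eigenvalues i = 1) : M = 1 := by
  have hUU : (hM.eigenvectorUnitary : Matrix (Fin n) (Fin n) ℝ) *
      star (hM.eigenvectorUnitary : Matrix (Fin n) (Fin n) ℝ) = 1 :=
    (Matrix.mem_unitaryGroup_iff).mp hM.eigenvectorUnitary.2
  have hd : (RCLike.ofReal ∘ hM.eigenvalues : Fin n → ℝ) = fun _ => 1 := by
    funext i; simp [h i]
  conv_lhs => rw [hM.spectral_theorem, Unitary.conjStarAlgAut_apply, hd, diagonal_one]
  rw [Matrix.mul_one, hUU]

/-- det(1+M) > 2^n for M posdef with det 1 and M ≠ 1 -/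
lemma det_one_add_gt {n : ℕ} {M : Matrix (Fin n) (Fin n) ℝ} (hM : M.PosDef)
    (hdet : M.det = 1) (hne : M ≠ 1) : (2 : ℝ) ^ n < (1 + M).det := by
  set μ := hM.isHermitian.eigenvalues with hμ
  have hpos : ∀ i, 0 < μ i := hM.eigenvalues_pos
  have hprod : ∏ i, μ i = 1 := by
    have := hM.isHermitian.det_eq_prod_eigenvalues
    simpa [hdet] using this.symm
  have hex : ∃ i, μ i ≠ 1 := by
    by_contra h
    push_neg at h
    exact hne (eq_one_of_eig hM.isHermitian h)
  -- product of square roots is 1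
  have hsqprod : ∏ i, Real.sqrt (μ i) = 1 := by
    have h2 : (∏ i, Real.sqrt (μ i)) ^ 2 = ∏ i, μ i := by
      rw [← Finset.prod_pow]
      exact Finset.prod_congr rfl fun i _ => Real.sq_sqrt (hpos i).le
    have h3 : 0 ≤ ∏ i, Real.sqrt (μ i) :=
      Finset.prod_nonneg fun i _ => Real.sqrt_nonneg _
    calc ∏ i, Real.sqrt (μ i) = Real.sqrt ((∏ i, Real.sqrt (μ i)) ^ 2) :=
          (Real.sqrt_sq h3).symm
      _ = Real.sqrt 1 := by rw [h2, hprod]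
      _ = 1 := Real.sqrt_one
  have hle : ∀ i : Fin n, 2 * Real.sqrt (μ i) ≤ 1 + μ i := by
    intro i
    nlinarith [Real.sq_sqrt (hpos i).le, Real.sqrt_nonneg (μ i), sq_nonneg (1 - Real.sqrt (μ i))]
  obtain ⟨i₀, hi₀⟩ := hex
  have hlt : 2 * Real.sqrt (μ i₀) < 1 + μ i₀ := by
    have hs1 : Real.sqrt (μ i₀) ≠ 1 := by
      intro h
      exact hi₀ (by rw [← Real.sq_sqrt (hpos i₀).le, h]; norm_num)
    have : (0:ℝ) < (1 - Real.sqrt (μ i₀)) ^ 2 := by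
      have : (1:ℝ) - Real.sqrt (μ i₀) ≠ 0 := fun h => hs1 (by linarith [h])
      positivity
    nlinarith [Real.sq_sqrt (hpos i₀).le]
  have hmain : ∏ i, (2 * Real.sqrt (μ i)) < ∏ i, (1 + μ i) := by
    refine Finset.prod_lt_prod (fun i _ => mul_pos two_pos (Real.sqrt_pos.mpr (hpos i))) (fun i _ => hle i) ⟨i₀, mem_univ _, hlt⟩
  have h2n : ∏ i, (2 * Real.sqrt (μ i)) = 2 ^ n := by
    rw [Finset.prod_mul_distrib, hsqprod, mul_one, Finset.prod_const, Finset.card_univ,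
      Fintype.card_fin]
  rw [det_one_add hM.isHermitian]
  rw [← h2n]
  exact hmain

open scoped MatrixOrder in
/-- Strict Minkowski-type inequality for equal determinants. -/
lemma mink {n : ℕ} {A B : Matrix (Fin n) (Fin n) ℝ} (hA : A.PosDef) (hB : B.PosDef)
    (hdet : B.det = A.det) (hne : A ≠ B) : 2 ^ n * A.det < (A + B).det := by
  set S := CFC.sqrt A with hSdef
  have hSS : S * S = A := CFC.sqrt_mul_sqrt_self A hA.posSemidef.nonneg
  have hSdet : S.det * S.det = A.det := by rw [← Matrix.det_mul, hSS]
  have hSd0 : IsUnit S.det := by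
    have : S.det ≠ 0 := fun h => by simp [h] at hSdet; exact hA.det_pos.ne' hSdet.symm
    exact this.isUnit
  have hSh : Sᵀ = S := by
    have := (CFC.sqrt_nonneg A).posSemidef.isHermitian
    rw [Matrix.IsHermitian] at this
    calc Sᵀ = Sᴴ := by ext i j; simp [conjTranspose_apply]
      _ = S := this
  have hS1 : S * S⁻¹ = 1 := Matrix.mul_nonsing_inv S hSd0
  have hS1' : S⁻¹ * S = 1 := Matrix.nonsing_inv_mul S hSd0
  have hSid : (S⁻¹)ᵀ = S⁻¹ := by rw [Matrix.transpose_nonsing_inv, hSh]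
  set M := S⁻¹ * B * S⁻¹ with hMdef
  have hMpd : M.PosDef := by
    have := posDef_conj_s15 hB (C := S⁻¹) ?_
    · rwa [hSid] at this
    · have : S⁻¹.det = Ring.inverse S.det := Matrix.det_nonsing_inv S
      rw [this]; exact (by rw [Ring.inverse_of_isUnit hSd0]; exact Units.isUnit _)
  have hSMS : S * M * S = B := by
    rw [hMdef, show S * (S⁻¹ * B * S⁻¹) * S = (S * S⁻¹) * B * (S⁻¹ * S) by
      simp [Matrix.mul_assoc], hS1, hS1', Matrix.one_mul, Matrix.mul_one]
  have hMdet : M.det = 1 := by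
    have h1 : M.det = S⁻¹.det * B.det * S⁻¹.det := by
      rw [hMdef, Matrix.det_mul, Matrix.det_mul]
    have hSinv : S⁻¹.det = (S.det)⁻¹ := by
      rw [Matrix.det_nonsing_inv, Ring.inverse_eq_inv']
    have hS0 : S.det ≠ 0 := hSd0.ne_zero
    rw [h1, hSinv, hdet, ← hSdet]
    field_simp
  have hMne : M ≠ 1 := by
    intro h
    apply hne
    rw [h, Matrix.mul_one, hSS] at hSMS
    exact hSMS
  have hfact : A + B = S * (1 + M) * S := by
    rw [Matrix.mul_add, Matrix.add_mul, Matrix.mul_one, hSS, hSMS]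
  have hgt : 2 ^ n < (1 + M).det := det_one_add_gt hMpd hMdet hMne
  have hdetfact : (A + B).det = (1 + M).det * A.det := by
    rw [hfact, Matrix.det_mul, Matrix.det_mul, ← hSdet]; ring
  rw [hdetfact]
  exact mul_lt_mul_of_pos_right hgt hA.det_pos

lemma chol_key (lam : ℝ) (h0 : 0 < lam) (h1 : lam < 1) (t i j : ℕ) (hji : j ≤ i) (hit : i < t) :
    ∑ k ∈ Finset.range t,
      ((if k = 0 then lam ^ i else if k ≤ i then Real.sqrt (1 - lam ^ 2) * lam ^ (i - k) else 0) *
       (if k = 0 then lam ^ j else if k ≤ j then Real.sqrt (1 - lam ^ 2) * lam ^ (j - k) else 0))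
      = lam ^ (i - j) := by
  set s := Real.sqrt (1 - lam ^ 2) with hs
  have hs2 : s ^ 2 = 1 - lam ^ 2 := Real.sq_sqrt (by nlinarith)
  have hsub : Finset.range (j + 1) ⊆ Finset.range t := by
    apply Finset.range_subset_range.mpr; omega
  rw [← Finset.sum_subset hsub ?vanish]
  case vanish =>
    intro k hk hk2
    simp only [Finset.mem_range] at hk hk2
    have hk0 : ¬ (k = 0) := by omega
    have hkj : ¬ (k ≤ j) := by omega
    simp [hk0, hkj]
  rw [Finset.sum_range_succ']
  have hmain : ∀ k ∈ Finset.range j,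
      ((if k + 1 = 0 then lam ^ i else if k + 1 ≤ i then s * lam ^ (i - (k+1)) else 0) *
       (if k + 1 = 0 then lam ^ j else if k + 1 ≤ j then s * lam ^ (j - (k+1)) else 0))
      = (1 - lam ^ 2) * lam ^ (i - j) * (lam ^ 2) ^ (j - 1 - k) := by
    intro k hk
    simp only [Finset.mem_range] at hk
    have hki : k + 1 ≤ i := by omega
    have hkj : k + 1 ≤ j := by omega
    rw [if_neg (Nat.succ_ne_zero k), if_neg (Nat.succ_ne_zero k), if_pos hki, if_pos hkj]
    have he : (i - (k + 1)) + (j - (k + 1)) = (i - j) + 2 * (j - 1 - k) := by omega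
    calc (s * lam ^ (i - (k+1))) * (s * lam ^ (j - (k+1)))
        = s ^ 2 * lam ^ ((i - (k+1)) + (j - (k+1))) := by rw [pow_add]; ring
      _ = (1 - lam ^ 2) * lam ^ (i - j) * (lam ^ 2) ^ (j - 1 - k) := by
          rw [hs2, he, pow_add, pow_mul]; ring
  rw [Finset.sum_congr rfl hmain, ← Finset.mul_sum,
    Finset.sum_range_reflect (fun m => (lam ^ 2) ^ m) j]
  have hgeom : (1 - lam ^ 2) * ∑ k ∈ Finset.range j, (lam ^ 2) ^ k = 1 - (lam ^ 2) ^ j := by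
    have hg := geom_sum_mul (lam ^ 2) j
    linear_combination -hg
  have hij : lam ^ (i - j) * (lam ^ 2) ^ j = lam ^ i * lam ^ j := by
    rw [← pow_mul, ← pow_add, ← pow_add]
    congr 1
    omega
  have h00 : ((if (0:ℕ) = 0 then lam ^ i else if 0 ≤ i then s * lam ^ (i - 0) else 0) *
      (if (0:ℕ) = 0 then lam ^ j else if 0 ≤ j then s * lam ^ (j - 0) else 0))
      = lam ^ i * lam ^ j := by norm_num
  rw [h00]
  linear_combination lam ^ (i - j) * hgeom - hij

lemma V_posDef {t : ℕ} (lam : ℝ) (h0 : 0 < lam) (h1 : lam < 1)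
    (V : Matrix (Fin t) (Fin t) ℝ)
    (hV : ∀ i j, V i j = lam ^ (((i : ℤ) - (j : ℤ)).natAbs)) : V.PosDef := by
  set s := Real.sqrt (1 - lam ^ 2) with hs
  set L : Matrix (Fin t) (Fin t) ℝ := Matrix.of (fun i k =>
    if (k : ℕ) = 0 then lam ^ (i : ℕ) else
      if (k : ℕ) ≤ (i : ℕ) then s * lam ^ ((i : ℕ) - (k : ℕ)) else 0) with hL
  have hiff : ∀ a b : Fin t, (b : ℕ) ≤ (a : ℕ) →
      ∑ k : Fin t, L a k * L b k = lam ^ ((a : ℕ) - (b : ℕ)) := by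
    intro a b hba
    have hk := chol_key lam h0 h1 t a b hba a.isLt
    rw [← hs] at hk
    rw [← hk]
    simp only [hL, Matrix.of_apply]
    exact Fin.sum_univ_eq_sum_range (fun k =>
      (if k = 0 then lam ^ (a : ℕ) else if k ≤ (a : ℕ) then s * lam ^ ((a : ℕ) - k) else 0) *
      (if k = 0 then lam ^ (b : ℕ) else if k ≤ (b : ℕ) then s * lam ^ ((b : ℕ) - k) else 0)) t
  have hfac : V = L * Lᵀ := by
    ext i j
    rw [hV, Matrix.mul_apply]
    simp only [transpose_apply]
    rcases le_total (j : ℕ) (i : ℕ) with hji | hij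
    · rw [hiff i j hji]
      congr 1
      omega
    · have hcomm : ∑ k : Fin t, L i k * L j k = ∑ k : Fin t, L j k * L i k :=
        Finset.sum_congr rfl fun k _ => mul_comm _ _
      rw [hcomm, hiff j i hij]
      congr 1
      omega
  have hspos : 0 < s := Real.sqrt_pos.mpr (by nlinarith)
  have hLtri : L.BlockTriangular OrderDual.toDual := by
    intro i j hij
    have hij' : (i : ℕ) < (j : ℕ) := by
      have : i < j := hij
      exact this
    simp only [hL, Matrix.of_apply]
    rw [if_neg (by omega), if_neg (by omega)]
  have hdetL : L.det = ∏ i, L i i := Matrix.det_of_lowerTriangular L hLtri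
  have hLdet : IsUnit L.det := by
    rw [hdetL]
    apply IsUnit.mk0
    apply Finset.prod_ne_zero_iff.mpr
    intro i _
    simp only [hL, Matrix.of_apply]
    by_cases hi : (i : ℕ) = 0
    · rw [if_pos hi]; exact pow_ne_zero _ h0.ne'
    · rw [if_neg hi, if_pos le_rfl]
      exact mul_ne_zero hspos.ne' (pow_ne_zero _ h0.ne')
  have hunit : IsUnit (Lᵀ).det := by rwa [Matrix.det_transpose]
  have hpd := posDef_conj_s15 Matrix.PosDef.one hunit
  rw [transpose_transpose, Matrix.mul_one] at hpd
  rwa [hfac]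


/-- For the AR(1)-type matrix V_{ij} = λ^{|i−j|} with t > 3 and P ≠ I a
permutation matrix of the form 1 ⊕ Q ⊕ 1 (fixing first and last coordinates),
det((V⁻¹ + PᵀV⁻¹P)⁻¹) < det(V)/2^t. -/
theorem stmt15 {t : ℕ} (ht : 3 < t) (lam : ℝ) (hlam : lam ∈ Set.Ioo (0 : ℝ) 1)
    (V : Matrix (Fin t) (Fin t) ℝ)
    (hV : ∀ i j, V i j = lam ^ (((i : ℤ) - (j : ℤ)).natAbs))
    (σ : Equiv.Perm (Fin t))
    (h0 : ∀ i : Fin t, (i : ℕ) = 0 → σ i = i)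
    (hlast : ∀ i : Fin t, (i : ℕ) = t - 1 → σ i = i)
    (P : Matrix (Fin t) (Fin t) ℝ) (hP : P = σ.permMatrix ℝ) (hPne : P ≠ 1) :
    ((V⁻¹ + Pᵀ * V⁻¹ * P)⁻¹).det < V.det / 2 ^ t := by
  obtain ⟨hl0, hl1⟩ := hlam
  have hVpd : V.PosDef := V_posDef lam hl0 hl1 V hV
  have hVdet : 0 < V.det := hVpd.det_pos
  have hVunit : IsUnit V.det := hVdet.ne'.isUnit
  have hApd : (V⁻¹).PosDef := hVpd.inv
  have hPdet : P.det = 1 ∨ P.det = -1 := by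
    rw [hP, Matrix.det_permutation]
    rcases Int.units_eq_one_or (Equiv.Perm.sign σ) with h | h <;> rw [h] <;> simp
  have hPunit : IsUnit P.det := by rcases hPdet with h | h <;> rw [h] <;> simp
  have hBpd : (Pᵀ * V⁻¹ * P).PosDef := posDef_conj_s15 hApd hPunit
  have hdetB : (Pᵀ * V⁻¹ * P).det = (V⁻¹).det := by
    rw [Matrix.det_mul, Matrix.det_mul, Matrix.det_transpose]
    rcases hPdet with h | h <;> rw [h] <;> ring
  -- the two matrices are distinct
  have hPtperm : Pᵀ = (σ⁻¹).permMatrix ℝ := by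
    rw [hP]
    show (σ.toPEquiv.toMatrix)ᵀ = (σ⁻¹).toPEquiv.toMatrix
    rw [← PEquiv.toMatrix_symm, ← Equiv.toPEquiv_symm]
    rfl
  have hPPt : P * Pᵀ = 1 := by
    rw [hPtperm, hP]
    show σ.toPEquiv.toMatrix * (σ⁻¹).toPEquiv.toMatrix = 1
    rw [← PEquiv.toMatrix_trans, ← Equiv.toPEquiv_trans]
    have : σ.trans σ⁻¹ = Equiv.refl (Fin t) := by
      ext x; simp
    rw [this, Equiv.toPEquiv_refl, PEquiv.toMatrix_refl]
  have hPtP : Pᵀ * P = 1 := by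
    rw [hPtperm, hP]
    show (σ⁻¹).toPEquiv.toMatrix * σ.toPEquiv.toMatrix = 1
    rw [← PEquiv.toMatrix_trans, ← Equiv.toPEquiv_trans]
    have : (σ⁻¹).trans σ = Equiv.refl (Fin t) := by
      ext x; simp
    rw [this, Equiv.toPEquiv_refl, PEquiv.toMatrix_refl]
  have hne : V⁻¹ ≠ Pᵀ * V⁻¹ * P := by
    intro heq
    apply hPne
    have h2 : P * V⁻¹ * Pᵀ = V⁻¹ := by
      calc P * V⁻¹ * Pᵀ = P * (Pᵀ * V⁻¹ * P) * Pᵀ := by rw [← heq]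
        _ = (P * Pᵀ) * V⁻¹ * (P * Pᵀ) := by simp [Matrix.mul_assoc]
        _ = V⁻¹ := by rw [hPPt, Matrix.one_mul, Matrix.mul_one]
    have h3 : P * V⁻¹ = V⁻¹ * P := by
      calc P * V⁻¹ = P * V⁻¹ * (Pᵀ * P) := by rw [hPtP, Matrix.mul_one]
        _ = (P * V⁻¹ * Pᵀ) * P := by simp [Matrix.mul_assoc]
        _ = V⁻¹ * P := by rw [h2]
    have h4 : V * P = P * V := by
      calc V * P = V * P * (V⁻¹ * V) := by
            rw [Matrix.nonsing_inv_mul V hVunit, Matrix.mul_one]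
        _ = V * (P * V⁻¹) * V := by simp [Matrix.mul_assoc]
        _ = V * (V⁻¹ * P) * V := by rw [h3]
        _ = (V * V⁻¹) * (P * V) := by simp [Matrix.mul_assoc]
        _ = P * V := by rw [Matrix.mul_nonsing_inv V hVunit, Matrix.one_mul]
    have h5 : V.submatrix σ id = V.submatrix id σ.symm := by
      have hPV : P * V = V.submatrix σ id := by
        rw [hP]; exact PEquiv.toMatrix_toPEquiv_mul σ V
      have hVP : V * P = V.submatrix id σ.symm := by
        rw [hP]; exact PEquiv.mul_toMatrix_toPEquiv V σ
      rw [← hPV, ← hVP, h4]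
    have hfix : ∀ b : Fin t, σ b = b := by
      intro b
      set i0 : Fin t := ⟨0, by omega⟩ with hi0
      have hσ0 : σ i0 = i0 := h0 i0 rfl
      have h6 := congrFun (congrFun h5 i0) (σ b)
      simp only [Matrix.submatrix_apply, id, hσ0, Equiv.symm_apply_apply] at h6
      rw [hV, hV] at h6
      have h7 : (((i0 : ℤ) - ((σ b : Fin t) : ℤ)).natAbs) = (((i0 : ℤ) - (b : ℤ)).natAbs) := by
        by_contra hne'
        rcases Nat.lt_or_ge (((i0 : ℤ) - ((σ b : Fin t) : ℤ)).natAbs)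
            (((i0 : ℤ) - (b : ℤ)).natAbs) with hlt | hge
        · exact absurd h6 (ne_of_gt (pow_lt_pow_right_of_lt_one₀ hl0 hl1 hlt))
        · have hlt2 : (((i0 : ℤ) - (b : ℤ)).natAbs) <
              (((i0 : ℤ) - ((σ b : Fin t) : ℤ)).natAbs) := by omega
          exact absurd h6 (ne_of_lt (pow_lt_pow_right_of_lt_one₀ hl0 hl1 hlt2))
      have hi00 : (i0 : ℤ) = 0 := by simp [hi0]
      apply Fin.ext
      omega
    have hσ1 : σ = Equiv.refl (Fin t) := Equiv.ext hfix
    rw [hP, hσ1]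
    show (Equiv.refl (Fin t)).toPEquiv.toMatrix = 1
    rw [Equiv.toPEquiv_refl, PEquiv.toMatrix_refl]
  have hmink : 2 ^ t * (V⁻¹).det < (V⁻¹ + Pᵀ * V⁻¹ * P).det :=
    mink hApd hBpd hdetB hne
  have hAdet : (V⁻¹).det = (V.det)⁻¹ := by
    rw [Matrix.det_nonsing_inv, Ring.inverse_eq_inv']
  have hsumpd : (V⁻¹ + Pᵀ * V⁻¹ * P).PosDef := hApd.add hBpd
  have hsd : 0 < (V⁻¹ + Pᵀ * V⁻¹ * P).det := hsumpd.det_pos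
  have hgoal_det : ((V⁻¹ + Pᵀ * V⁻¹ * P)⁻¹).det = ((V⁻¹ + Pᵀ * V⁻¹ * P).det)⁻¹ := by
    rw [Matrix.det_nonsing_inv, Ring.inverse_eq_inv']
  rw [hgoal_det]
  have hkey : (V.det / 2 ^ t)⁻¹ < (V⁻¹ + Pᵀ * V⁻¹ * P).det := by
    rw [hAdet] at hmink
    have heq2 : (V.det / 2 ^ t)⁻¹ = 2 ^ t * (V.det)⁻¹ := by
      rw [inv_div, div_eq_mul_inv]
    rw [heq2]
    exact hmink
  have hqpos : 0 < (V.det / 2 ^ t)⁻¹ := by positivity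
  calc ((V⁻¹ + Pᵀ * V⁻¹ * P).det)⁻¹ < ((V.det / 2 ^ t)⁻¹)⁻¹ :=
        inv_strictAnti₀ hqpos hkey
    _ = V.det / 2 ^ t := inv_inv _
end

section
/- In the two-block setting with P = 1 ⊕ Q ⊕ 1 (a permutation fixing first and last coordinates) and V the AR(1)-type matrix V_{ij} = λ^{|i−j|}, the upper-left t×t block of (Z^T R_0^{-1} Z)^{-1} equals σ²(V^{-1} + P^T V^{-1} P)^{-1}. -/
open Matrix Finset


/-- Subdiagonal matrix. -/
def Lmat (t : ℕ) : Matrix (Fin t) (Fin t) ℝ :=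
  Matrix.of fun i j => if (i : ℕ) = (j : ℕ) + 1 then 1 else 0

lemma mulVec_Lmat {t : ℕ} (x : Fin t → ℝ) (i : Fin t) :
    (Lmat t *ᵥ x) i = if h : 1 ≤ (i : ℕ) then x ⟨(i : ℕ) - 1, by omega⟩ else 0 := by
  simp only [Matrix.mulVec, dotProduct, Lmat, Matrix.of_apply]
  split
  · next h =>
    rw [Finset.sum_eq_single (⟨(i : ℕ) - 1, by omega⟩ : Fin t)]
    · rw [if_pos (by simp only [Fin.val_mk]; omega), one_mul]
    · intro b _ hb
      rw [if_neg, zero_mul]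
      intro hc; apply hb; exact Fin.ext (by simp only [Fin.val_mk] at *; omega)
    · intro h; exact absurd (Finset.mem_univ _) h
  · next h =>
    apply Finset.sum_eq_zero
    intro b _
    rw [if_neg (by omega), zero_mul]

lemma mulVec_LmatT {t : ℕ} (x : Fin t → ℝ) (i : Fin t) :
    ((Lmat t)ᵀ *ᵥ x) i = if h : (i : ℕ) + 1 < t then x ⟨(i : ℕ) + 1, h⟩ else 0 := by
  simp only [Matrix.mulVec, dotProduct, Lmat, Matrix.transpose_apply, Matrix.of_apply]
  split
  · next h =>
    rw [Finset.sum_eq_single (⟨(i : ℕ) + 1, h⟩ : Fin t)]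
    · simp
    · intro b _ hb
      rw [if_neg, zero_mul]
      intro hc; apply hb; exact Fin.ext (by simp only [Fin.val_mk] at *; omega)
    · intro h; exact absurd (Finset.mem_univ _) h
  · next h =>
    apply Finset.sum_eq_zero
    intro b _
    rw [if_neg (by omega), zero_mul]

lemma mul_Lmat {t : ℕ} (M : Matrix (Fin t) (Fin t) ℝ) (i j : Fin t) :
    (M * Lmat t) i j = if h : (j : ℕ) + 1 < t then M i ⟨(j : ℕ) + 1, h⟩ else 0 := by
  simp only [Matrix.mul_apply, Lmat, Matrix.of_apply]
  split
  · next h =>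
    rw [Finset.sum_eq_single (⟨(j : ℕ) + 1, h⟩ : Fin t)]
    · simp
    · intro b _ hb
      rw [if_neg, mul_zero]
      intro hc; apply hb; exact Fin.ext (by simp only [Fin.val_mk] at *; omega)
    · intro h; exact absurd (Finset.mem_univ _) h
  · next h =>
    apply Finset.sum_eq_zero
    intro b _
    rw [if_neg (by omega), mul_zero]

lemma mul_LmatT {t : ℕ} (M : Matrix (Fin t) (Fin t) ℝ) (i j : Fin t) :
    (M * (Lmat t)ᵀ) i j = if h : 1 ≤ (j : ℕ) then M i ⟨(j : ℕ) - 1, by omega⟩ else 0 := by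
  simp only [Matrix.mul_apply, Lmat, Matrix.transpose_apply, Matrix.of_apply]
  split
  · next h =>
    rw [Finset.sum_eq_single (⟨(j : ℕ) - 1, by omega⟩ : Fin t)]
    · rw [if_pos (by simp only [Fin.val_mk]; omega), mul_one]
    · intro b _ hb
      rw [if_neg, mul_zero]
      intro hc; apply hb; exact Fin.ext (by simp only [Fin.val_mk] at *; omega)
    · intro h; exact absurd (Finset.mem_univ _) h
  · next h =>
    apply Finset.sum_eq_zero
    intro b _
    rw [if_neg (by omega), mul_zero]


noncomputable def Dvec (t : ℕ) (lam : ℝ) : Fin t → ℝ :=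
  fun i => if (i : ℕ) = 0 ∨ (i : ℕ) = t - 1 then 1 else 1 + lam ^ 2

noncomputable def Wmat (t : ℕ) (lam : ℝ) : Matrix (Fin t) (Fin t) ℝ :=
  (1 - lam ^ 2)⁻¹ • (Matrix.diagonal (Dvec t lam) - lam • Lmat t - lam • (Lmat t)ᵀ)

noncomputable def uvec (t : ℕ) (lam : ℝ) : Fin t → ℝ :=
  fun i => if (i : ℕ) = 0 ∨ (i : ℕ) = t - 1 then (1-lam^2)⁻¹ * (1-lam)
    else (1-lam^2)⁻¹ * (1-lam)^2

/-- three-term recurrence identity for powers with natAbs exponents -/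
lemma key_mid (lam : ℝ) (m : ℤ) :
    (1 + lam ^ 2) * lam ^ m.natAbs - lam * lam ^ (m + 1).natAbs - lam * lam ^ (m - 1).natAbs
      = if m = 0 then 1 - lam ^ 2 else 0 := by
  rcases lt_trichotomy m 0 with h | h | h
  · have h1 : m.natAbs = (m + 1).natAbs + 1 := by omega
    have h2 : (m - 1).natAbs = (m + 1).natAbs + 2 := by omega
    rw [if_neg (by omega), h1, h2]; ring
  · subst h; norm_num; ring
  · have h1 : m.natAbs = (m - 1).natAbs + 1 := by omega
    have h2 : (m + 1).natAbs = (m - 1).natAbs + 2 := by omega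
    rw [if_neg (by omega), h1, h2]; ring

lemma key_left (lam : ℝ) (m : ℤ) (hm : 0 ≤ m) :
    lam ^ m.natAbs - lam * lam ^ (m - 1).natAbs = if m = 0 then 1 - lam ^ 2 else 0 := by
  rcases eq_or_lt_of_le hm with h | h
  · rw [← h]; norm_num; ring
  · have h1 : m.natAbs = (m - 1).natAbs + 1 := by omega
    rw [if_neg (by omega), h1]; ring

lemma key_right (lam : ℝ) (m : ℤ) (hm : m ≤ 0) :
    lam ^ m.natAbs - lam * lam ^ (m + 1).natAbs = if m = 0 then 1 - lam ^ 2 else 0 := by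
  rcases eq_or_lt_of_le hm with h | h
  · rw [h]; norm_num; ring
  · have h1 : m.natAbs = (m + 1).natAbs + 1 := by omega
    rw [if_neg (by omega), h1]; ring


lemma V_mul_W {t : ℕ} (ht : 2 ≤ t) (lam : ℝ) (hc : 1 - lam ^ 2 ≠ 0)
    (V : Matrix (Fin t) (Fin t) ℝ)
    (hV : ∀ i j, V i j = lam ^ (((i : ℤ) - (j : ℤ)).natAbs)) :
    V * Wmat t lam = 1 := by
  ext i j
  rw [Wmat, Matrix.mul_smul, Matrix.smul_apply, Matrix.mul_sub, Matrix.mul_sub,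
    Matrix.sub_apply, Matrix.sub_apply, Matrix.mul_diagonal,
    Matrix.mul_smul, Matrix.smul_apply, Matrix.mul_smul, Matrix.smul_apply,
    mul_Lmat, mul_LmatT]
  have hone : (1 : Matrix (Fin t) (Fin t) ℝ) i j = if ((i:ℤ) - (j:ℤ)) = 0 then 1 else 0 := by
    rw [Matrix.one_apply]
    by_cases h : i = j
    · rw [if_pos h, if_pos (by omega)]
    · rw [if_neg h, if_neg (by simp only [Fin.ext_iff] at h; omega)]
  rw [hone]
  set m : ℤ := (i : ℤ) - (j : ℤ) with hm
  have key : V i j * Dvec t lam j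
      - lam • (if h : (j : ℕ) + 1 < t then V i ⟨(j : ℕ) + 1, h⟩ else 0)
      - lam • (if h : 1 ≤ (j : ℕ) then V i ⟨(j : ℕ) - 1, by omega⟩ else 0)
      = if m = 0 then 1 - lam ^ 2 else 0 := by
    rw [hV, Dvec]
    by_cases hj0 : (j : ℕ) = 0
    · -- left boundary
      rw [if_pos (Or.inl hj0), dif_pos (by omega), dif_neg (by omega), hV]
      have e1 : (((i:ℤ) - ((⟨(j:ℕ)+1, by omega⟩ : Fin t) : ℤ))) = m - 1 := by
        simp only [Fin.val_mk]; push_cast; omega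
      rw [e1]
      have := key_left lam m (by omega)
      rw [smul_eq_mul, smul_zero, mul_one, sub_zero, this]
    · by_cases hjl : (j : ℕ) = t - 1
      · -- right boundary
        rw [if_pos (Or.inr hjl), dif_neg (by omega), dif_pos (by omega), hV]
        have e1 : (((i:ℤ) - ((⟨(j:ℕ)-1, by omega⟩ : Fin t) : ℤ))) = m + 1 := by
          simp only [Fin.val_mk]; push_cast; omega
        rw [e1]
        have := key_right lam m (by omega)
        simp only [smul_eq_mul, mul_one, mul_zero, sub_zero]
        linarith [this]
      · -- interior
        rw [if_neg (by omega), dif_pos (by omega), dif_pos (by omega), hV, hV]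
        have e1 : (((i:ℤ) - ((⟨(j:ℕ)+1, by omega⟩ : Fin t) : ℤ))) = m - 1 := by
          simp only [Fin.val_mk]; push_cast; omega
        have e2 : (((i:ℤ) - ((⟨(j:ℕ)-1, by omega⟩ : Fin t) : ℤ))) = m + 1 := by
          simp only [Fin.val_mk]; push_cast; omega
        rw [e1, e2, smul_eq_mul, smul_eq_mul, mul_comm (lam ^ m.natAbs)]
        have := key_mid lam m
        linarith [this]
  rw [key]
  by_cases h : m = 0
  · rw [if_pos h, if_pos h, smul_eq_mul, inv_mul_cancel₀ hc]
  · rw [if_neg h, if_neg h, smul_zero]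


lemma sum_id (s : ℕ) (lam : ℝ) (y : ℕ → ℝ) :
    ∑ n ∈ Finset.range (s+2), y n * ((if n = 0 ∨ n = s+1 then 1 else 1+lam^2) * y n
        - lam * (if 1 ≤ n then y (n-1) else 0) - lam * (if n+1 < s+2 then y (n+1) else 0))
    = ∑ n ∈ Finset.range (s+1), (y (n+1) - lam * y n)^2 + (1-lam^2) * (y 0)^2 := by
  have expand : ∀ n, y n * ((if n = 0 ∨ n = s+1 then 1 else 1+lam^2) * y n
        - lam * (if 1 ≤ n then y (n-1) else 0) - lam * (if n+1 < s+2 then y (n+1) else 0))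
      = (1+lam^2) * y n^2 - lam^2 * (if n = 0 then y n^2 else 0)
          - lam^2 * (if n = s+1 then y n^2 else 0)
          - lam * (if 1 ≤ n then y n * y (n-1) else 0)
          - lam * (if n+1 < s+2 then y n * y (n+1) else 0) := by
    intro n
    split_ifs <;> first | ring1 | (exfalso; omega)
  rw [Finset.sum_congr rfl (fun n _ => expand n)]
  simp only [Finset.sum_sub_distrib, ← Finset.mul_sum]
  rw [Finset.sum_ite_eq' (Finset.range (s+2)) 0 (fun n => y n ^ 2),
      Finset.sum_ite_eq' (Finset.range (s+2)) (s+1) (fun n => y n ^ 2),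
      if_pos (by simp), if_pos (by simp)]
  have hS2 : ∑ n ∈ Finset.range (s+2), (if 1 ≤ n then y n * y (n-1) else 0)
      = ∑ n ∈ Finset.range (s+1), y (n+1) * y n := by
    rw [Finset.sum_range_succ']
    simp
  have hS3 : ∑ n ∈ Finset.range (s+2), (if n+1 < s+2 then y n * y (n+1) else 0)
      = ∑ n ∈ Finset.range (s+1), y (n+1) * y n := by
    rw [Finset.sum_range_succ, if_neg (by omega), add_zero]
    apply Finset.sum_congr rfl
    intro n hn
    rw [if_pos (by simp only [Finset.mem_range] at hn; omega)]
    ring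
  rw [hS2, hS3]
  have hRHS : ∑ n ∈ Finset.range (s+1), (y (n+1) - lam * y n)^2
      = ∑ n ∈ Finset.range (s+1), y (n+1)^2
        - 2*lam*(∑ n ∈ Finset.range (s+1), y (n+1) * y n)
        + lam^2 * ∑ n ∈ Finset.range (s+1), y n ^2 := by
    rw [Finset.mul_sum, Finset.mul_sum, ← Finset.sum_sub_distrib, ← Finset.sum_add_distrib]
    apply Finset.sum_congr rfl
    intro n _
    ring
  rw [hRHS]
  have hT1 : ∑ n ∈ Finset.range (s+1), y (n+1)^2
      = ∑ n ∈ Finset.range (s+2), y n^2 - y 0^2 := by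
    rw [Finset.sum_range_succ' (fun n => y n^2) (s+1)]
    ring
  have hT2 : ∑ n ∈ Finset.range (s+1), y n^2
      = ∑ n ∈ Finset.range (s+2), y n^2 - y (s+1)^2 := by
    rw [Finset.sum_range_succ (fun n => y n^2) (s+1)]
    ring
  rw [hT1, hT2]
  ring


noncomputable def yext (t : ℕ) (x : Fin t → ℝ) : ℕ → ℝ :=
  fun n => if h : n < t then x ⟨n, h⟩ else 0

lemma quadform {t : ℕ} (ht : 2 ≤ t) (lam : ℝ) (x : Fin t → ℝ) :
    x ⬝ᵥ (Wmat t lam *ᵥ x)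
      = (1-lam^2)⁻¹ * (∑ n ∈ Finset.range (t-1), (yext t x (n+1) - lam * yext t x n)^2
          + (1-lam^2) * (yext t x 0)^2) := by
  obtain ⟨s, rfl⟩ : ∃ s, t = s + 2 := ⟨t - 2, by omega⟩
  rw [Wmat, Matrix.smul_mulVec, dotProduct_smul, smul_eq_mul]
  have hts : s + 2 - 1 = s + 1 := by omega
  rw [hts]
  congr 1
  rw [Matrix.sub_mulVec, Matrix.sub_mulVec, Matrix.smul_mulVec, Matrix.smul_mulVec,
      dotProduct_sub, dotProduct_sub, dotProduct_smul, dotProduct_smul]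
  simp only [dotProduct, Matrix.mulVec_diagonal, smul_eq_mul, Finset.mul_sum,
             ← Finset.sum_sub_distrib]
  have step : ∀ i : Fin (s+2),
      x i * (Dvec (s+2) lam i * x i) - lam * (x i * (Lmat (s+2) *ᵥ x) i)
        - lam * (x i * ((Lmat (s+2))ᵀ *ᵥ x) i)
      = yext (s+2) x (i:ℕ) * ((if (i:ℕ) = 0 ∨ (i:ℕ) = s+1 then 1 else 1+lam^2) * yext (s+2) x (i:ℕ)
        - lam * (if 1 ≤ (i:ℕ) then yext (s+2) x ((i:ℕ)-1) else 0)
        - lam * (if (i:ℕ)+1 < s+2 then yext (s+2) x ((i:ℕ)+1) else 0)) := by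
    intro i
    have hd : Dvec (s+2) lam i = if (i:ℕ) = 0 ∨ (i:ℕ) = s+1 then 1 else 1+lam^2 := by
      rw [Dvec]; norm_num
    rw [hd, mulVec_Lmat, mulVec_LmatT]
    simp only [yext]
    split_ifs <;> first | (simp only [Fin.eta]; first | ring1 | (exfalso; omega)) | ring1 | (exfalso; omega)
  rw [Finset.sum_congr rfl (fun i _ => step i)]
  rw [Fin.sum_univ_eq_sum_range (fun n => yext (s+2) x n * ((if n = 0 ∨ n = s+1 then 1 else 1+lam^2) * yext (s+2) x n
        - lam * (if 1 ≤ n then yext (s+2) x (n-1) else 0)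
        - lam * (if n+1 < s+2 then yext (s+2) x (n+1) else 0))) (s+2)]
  exact sum_id s lam (yext (s+2) x)

lemma Wmat_posDef {t : ℕ} (ht : 2 ≤ t) {lam : ℝ} (hl0 : 0 < lam) (hl1 : lam < 1) :
    (Wmat t lam).PosDef := by
  have hc : 0 < 1 - lam ^ 2 := by nlinarith
  refine Matrix.PosDef.of_dotProduct_mulVec_pos ?_ ?_
  · show (Wmat t lam)ᴴ = _
    have h1 : (Wmat t lam)ᴴ = (Wmat t lam)ᵀ := by
      ext i j; simp [Matrix.conjTranspose_apply]
    rw [h1, Wmat, Matrix.transpose_smul]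
    congr 1
    rw [Matrix.transpose_sub, Matrix.transpose_sub, Matrix.transpose_smul, Matrix.transpose_smul,
        Matrix.diagonal_transpose, Matrix.transpose_transpose]
    exact sub_right_comm _ _ _
  · intro x hx
    rw [star_trivial, quadform ht lam x]
    apply mul_pos (inv_pos.mpr hc)
    have hSnn : (0:ℝ) ≤ ∑ n ∈ Finset.range (t-1), (yext t x (n+1) - lam * yext t x n)^2 :=
      Finset.sum_nonneg fun n _ => sq_nonneg _
    have htot : (0:ℝ) ≤ ∑ n ∈ Finset.range (t-1), (yext t x (n+1) - lam * yext t x n)^2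
        + (1-lam^2) * (yext t x 0)^2 := by
      have : (0:ℝ) ≤ (1-lam^2) * (yext t x 0)^2 := by positivity
      linarith
    rcases htot.lt_or_eq with h | h
    · exact h
    · exfalso; apply hx
      have h2 : (1-lam^2) * (yext t x 0)^2 = 0 := by nlinarith [sq_nonneg (yext t x 0)]
      have hS0 : ∑ n ∈ Finset.range (t-1), (yext t x (n+1) - lam * yext t x n)^2 = 0 := by
        nlinarith [sq_nonneg (yext t x 0)]
      have hy0 : yext t x 0 = 0 := by
        have h3 : (yext t x 0)^2 = 0 := by
          rcases mul_eq_zero.1 h2 with h | h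
          · linarith
          · exact h
        exact pow_eq_zero_iff two_ne_zero |>.1 h3
      have hrec : ∀ n ∈ Finset.range (t-1), yext t x (n+1) = lam * yext t x n := by
        intro n hn
        have h4 := (Finset.sum_eq_zero_iff_of_nonneg (fun n _ => sq_nonneg _)).1 hS0 n hn
        have h5 : yext t x (n+1) - lam * yext t x n = 0 := by
          nlinarith [sq_nonneg (yext t x (n+1) - lam * yext t x n)]
        linarith
      have hall : ∀ n, yext t x n = 0 := by
        intro n
        induction n with
        | zero => exact hy0
        | succ k ih =>
          by_cases hk : k + 1 < t
          · rw [hrec k (Finset.mem_range.mpr (by omega)), ih, mul_zero]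
          · simp only [yext, dif_neg hk]
      funext i
      have h6 := hall (i : ℕ)
      simp only [yext, dif_pos i.isLt, Fin.eta] at h6
      simpa using h6


lemma Wmat_transpose (t : ℕ) (lam : ℝ) : (Wmat t lam)ᵀ = Wmat t lam := by
  rw [Wmat, Matrix.transpose_smul]
  congr 1
  rw [Matrix.transpose_sub, Matrix.transpose_sub, Matrix.transpose_smul, Matrix.transpose_smul,
      Matrix.diagonal_transpose, Matrix.transpose_transpose]
  exact sub_right_comm _ _ _

lemma Wmat_rowsum {t : ℕ} (ht : 2 ≤ t) (lam : ℝ) (i : Fin t) :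
    ∑ k, Wmat t lam i k = uvec t lam i := by
  have h := congrFun (congrFun (rfl : Wmat t lam = Wmat t lam) i)
  have : ∑ k, Wmat t lam i k = (Wmat t lam *ᵥ (fun _ => (1:ℝ))) i := by
    simp [Matrix.mulVec, dotProduct]
  rw [this, Wmat, Matrix.smul_mulVec, Pi.smul_apply, Matrix.sub_mulVec, Matrix.sub_mulVec,
      Matrix.smul_mulVec, Matrix.smul_mulVec, Pi.sub_apply, Pi.sub_apply,
      Pi.smul_apply, Pi.smul_apply, mulVec_Lmat, mulVec_LmatT, Matrix.mulVec_diagonal,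
      Dvec, uvec]
  by_cases h0 : (i : ℕ) = 0
  · rw [if_pos (Or.inl h0), if_pos (Or.inl h0), dif_neg (by omega), dif_pos (by omega)]
    simp only [smul_eq_mul]
    ring
  · by_cases hl : (i : ℕ) = t - 1
    · rw [if_pos (Or.inr hl), if_pos (Or.inr hl), dif_pos (by omega), dif_neg (by omega)]
      simp only [smul_eq_mul]
      ring
    · rw [if_neg (by omega), if_neg (by omega), dif_pos (by omega), dif_pos (by omega)]
      simp only [smul_eq_mul]
      ring

lemma Wmat_colsum {t : ℕ} (ht : 2 ≤ t) (lam : ℝ) (j : Fin t) :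
    ∑ k, Wmat t lam k j = uvec t lam j := by
  have : ∑ k, Wmat t lam k j = ∑ k, (Wmat t lam)ᵀ j k := by
    simp [Matrix.transpose_apply]
  rw [this, Wmat_transpose]
  exact Wmat_rowsum ht lam j

lemma uvec_pos {t : ℕ} (lam : ℝ) (hl0 : 0 < lam) (hl1 : lam < 1) (i : Fin t) :
    0 < uvec t lam i := by
  have hc : 0 < 1 - lam ^ 2 := by nlinarith
  have h1 : 0 < 1 - lam := by linarith
  rw [uvec]
  split_ifs
  · positivity
  · positivity


section perm
variable {t : ℕ} (σ : Equiv.Perm (Fin t))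

lemma permMatrix_apply (i j : Fin t) :
    σ.permMatrix ℝ i j = if σ i = j then 1 else 0 := by
  simp [Equiv.Perm.permMatrix, PEquiv.toMatrix_apply, Equiv.toPEquiv_apply]

lemma permMatrixT_mul {m : Type*} (M : Matrix (Fin t) m ℝ) (i : Fin t) (j : m) :
    ((σ.permMatrix ℝ)ᵀ * M) i j = M (σ⁻¹ i) j := by
  rw [Matrix.mul_apply]
  rw [Finset.sum_eq_single (σ⁻¹ i)]
  · rw [Matrix.transpose_apply, permMatrix_apply, if_pos (show σ (σ⁻¹ i) = i from (Equiv.eq_symm_apply σ).mp rfl), one_mul]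
  · intro b _ hb
    rw [Matrix.transpose_apply, permMatrix_apply, if_neg, zero_mul]
    intro h
    exact hb (by rw [← h]; simp)
  · intro h; exact absurd (Finset.mem_univ _) h

lemma mul_permMatrix {m : Type*} [Fintype m] (M : Matrix m (Fin t) ℝ) (i : m) (j : Fin t) :
    (M * σ.permMatrix ℝ) i j = M i (σ⁻¹ j) := by
  rw [Matrix.mul_apply]
  rw [Finset.sum_eq_single (σ⁻¹ j)]
  · rw [permMatrix_apply, if_pos (show σ (σ⁻¹ j) = j from (Equiv.eq_symm_apply σ).mp rfl), mul_one]
  · intro b _ hb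
    rw [permMatrix_apply, if_neg, mul_zero]
    intro h
    exact hb (by rw [← h]; simp)
  · intro h; exact absurd (Finset.mem_univ _) h

lemma permMatrix_mulVec (x : Fin t → ℝ) (i : Fin t) :
    (σ.permMatrix ℝ *ᵥ x) i = x (σ i) := by
  rw [Matrix.mulVec, dotProduct]
  rw [Finset.sum_eq_single (σ i)]
  · rw [permMatrix_apply, if_pos rfl, one_mul]
  · intro b _ hb
    rw [permMatrix_apply, if_neg (fun h => hb h.symm), zero_mul]
  · intro h; exact absurd (Finset.mem_univ _) h
end perm


/-- In the two-block setting with P = 1 ⊕ Q ⊕ 1 (a permutation fixing the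
first and last coordinates) and V the AR(1)-type matrix V_{ij} = λ^{|i−j|},
the upper-left t×t block of (ZᵀR₀⁻¹Z)⁻¹ equals σ²·(V⁻¹ + PᵀV⁻¹P)⁻¹.
Here σ2 denotes σ². -/
theorem stmt18 {t : ℕ} (ht : 2 ≤ t) (σ2 : ℝ) (hσ2 : 0 < σ2)
    (lam : ℝ) (hlam : lam ∈ Set.Ioo (0 : ℝ) 1)
    (V : Matrix (Fin t) (Fin t) ℝ)
    (hV : ∀ i j, V i j = lam ^ (((i : ℤ) - (j : ℤ)).natAbs))
    (σ : Equiv.Perm (Fin t))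
    (h0 : ∀ i : Fin t, (i : ℕ) = 0 → σ i = i)
    (hlast : ∀ i : Fin t, (i : ℕ) = t - 1 → σ i = i)
    (P : Matrix (Fin t) (Fin t) ℝ) (hP : P = σ.permMatrix ℝ)
    (Z : Matrix (Fin t ⊕ Fin t) (Fin t ⊕ Fin 1) ℝ)
    (hZ : Z = fromBlocks 1 (fun _ _ => 1) P (fun _ _ => -1))
    (R0 : Matrix (Fin t ⊕ Fin t) (Fin t ⊕ Fin t) ℝ)
    (hR0 : R0 = fromBlocks (σ2 • V) 0 0 (σ2 • V)) :
    ((Zᵀ * R0⁻¹ * Z)⁻¹).toBlocks₁₁ = σ2 • (V⁻¹ + Pᵀ * V⁻¹ * P)⁻¹ := by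
  obtain ⟨hl0, hl1⟩ := hlam
  have hc : (0:ℝ) < 1 - lam ^ 2 := by nlinarith
  subst hP
  set Jm : Matrix (Fin t) (Fin 1) ℝ := (fun _ _ => 1) with hJm
  set Km : Matrix (Fin t) (Fin 1) ℝ := (fun _ _ => -1) with hKm
  have hVW : V * Wmat t lam = 1 := V_mul_W ht lam (ne_of_gt hc) V hV
  have hWinv : V⁻¹ = Wmat t lam := inv_eq_right_inv hVW
  have hWpd : (Wmat t lam).PosDef := Wmat_posDef ht hl0 hl1
  have hfix : ∀ j : Fin t, ((σ⁻¹ j : Fin t) : ℕ) = 0 ∨ ((σ⁻¹ j : Fin t) : ℕ) = t - 1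
      ↔ ((j:ℕ) = 0 ∨ (j:ℕ) = t - 1) := by
    intro j
    constructor
    · rintro (h | h)
      · left
        have h2 := h0 (σ⁻¹ j) h
        rw [show σ (σ⁻¹ j) = j from (Equiv.eq_symm_apply σ).mp rfl] at h2
        rw [h2]; exact h
      · right
        have h2 := hlast (σ⁻¹ j) h
        rw [show σ (σ⁻¹ j) = j from (Equiv.eq_symm_apply σ).mp rfl] at h2
        rw [h2]; exact h
    · rintro (h | h)
      · left
        have h2 : σ⁻¹ j = j := by
          rw [Equiv.Perm.inv_eq_iff_eq]
          exact (h0 j h).symm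
        rw [h2]; exact h
      · right
        have h2 : σ⁻¹ j = j := by
          rw [Equiv.Perm.inv_eq_iff_eq]
          exact (hlast j h).symm
        rw [h2]; exact h
  have huinv : ∀ j : Fin t, uvec t lam (σ⁻¹ j) = uvec t lam j := by
    intro j
    simp only [uvec]
    by_cases h : (j:ℕ) = 0 ∨ (j:ℕ) = t - 1
    · rw [if_pos ((hfix j).2 h), if_pos h]
    · rw [if_neg (fun hh => h ((hfix j).1 hh)), if_neg h]
  -- positive definiteness of the conjugated matrix and the sum
  have hct : ∀ (A : Matrix (Fin t) (Fin t) ℝ), Aᴴ = Aᵀ := by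
    intro A; ext i j; simp [Matrix.conjTranspose_apply]
  have hPWPpd : ((σ.permMatrix ℝ)ᵀ * Wmat t lam * σ.permMatrix ℝ).PosDef := by
    refine Matrix.PosDef.of_dotProduct_mulVec_pos ?_ ?_
    · show _ᴴ = _
      rw [hct, Matrix.transpose_mul, Matrix.transpose_mul, Matrix.transpose_transpose,
          Wmat_transpose, ← Matrix.mul_assoc]
    · intro x hx
      rw [star_trivial]
      have hv : σ.permMatrix ℝ *ᵥ x ≠ 0 := by
        intro hzero
        apply hx
        funext i
        have h5 := congrFun hzero (σ⁻¹ i)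
        rw [permMatrix_mulVec] at h5
        simpa [show σ (σ⁻¹ i) = i from (Equiv.eq_symm_apply σ).mp rfl] using h5
      have h6 := hWpd.dotProduct_mulVec_pos hv
      rw [star_trivial] at h6
      rw [← Matrix.mulVec_mulVec, ← Matrix.mulVec_mulVec, Matrix.dotProduct_mulVec,
          Matrix.vecMul_transpose]
      exact h6
  have hGpd : (Wmat t lam + (σ.permMatrix ℝ)ᵀ * Wmat t lam * σ.permMatrix ℝ).PosDef :=
    hWpd.add hPWPpd
  have hGdet : IsUnit (Wmat t lam + (σ.permMatrix ℝ)ᵀ * Wmat t lam * σ.permMatrix ℝ).det :=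
    isUnit_iff_ne_zero.2 hGpd.det_pos.ne'
  have hGG : (Wmat t lam + (σ.permMatrix ℝ)ᵀ * Wmat t lam * σ.permMatrix ℝ)
      * (Wmat t lam + (σ.permMatrix ℝ)ᵀ * Wmat t lam * σ.permMatrix ℝ)⁻¹ = 1 :=
    Matrix.mul_nonsing_inv _ hGdet
  -- the scalar d
  have hspos : 0 < ∑ j, uvec t lam j :=
    Finset.sum_pos (fun i _ => uvec_pos lam hl0 hl1 i)
      ⟨(⟨0, by omega⟩ : Fin t), Finset.mem_univ _⟩
  have hd : 2 * σ2⁻¹ * (∑ j, uvec t lam j) ≠ 0 := by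
    have : 0 < σ2⁻¹ := inv_pos.2 hσ2
    positivity
  -- inverse of R0
  have hR0inv : R0⁻¹ = fromBlocks (σ2⁻¹ • Wmat t lam) 0 0 (σ2⁻¹ • Wmat t lam) := by
    apply inv_eq_right_inv
    rw [hR0, fromBlocks_multiply]
    simp only [Matrix.mul_zero, Matrix.zero_mul, add_zero, zero_add]
    rw [Matrix.smul_mul, Matrix.mul_smul, hVW, smul_smul,
        mul_inv_cancel₀ (ne_of_gt hσ2), one_smul]
    exact fromBlocks_one
  -- column/row sum helpers
  have hJWc : ∀ (z : Fin 1) (j : Fin t),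
      ((Jm)ᵀ * (σ2⁻¹ • Wmat t lam)) z j
        = σ2⁻¹ * uvec t lam j := by
    intro z j
    rw [Matrix.mul_apply]
    have e : ∀ k, (Jm)ᵀ z k * (σ2⁻¹ • Wmat t lam) k j
        = σ2⁻¹ * Wmat t lam k j := by
      intro k
      simp [hJm, hKm, Matrix.transpose_apply, Matrix.smul_apply, smul_eq_mul]
      exact one_mul _
    rw [Finset.sum_congr rfl (fun k _ => e k), ← Finset.mul_sum, Wmat_colsum ht]
  have hKWc : ∀ (z : Fin 1) (j : Fin t),
      ((Km)ᵀ * (σ2⁻¹ • Wmat t lam)) z j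
        = -(σ2⁻¹ * uvec t lam j) := by
    intro z j
    rw [Matrix.mul_apply]
    have e : ∀ k, (Km)ᵀ z k * (σ2⁻¹ • Wmat t lam) k j
        = -(σ2⁻¹ * Wmat t lam k j) := by
      intro k
      simp [hJm, hKm, Matrix.transpose_apply, Matrix.smul_apply, smul_eq_mul]
      exact neg_one_mul _
    rw [Finset.sum_congr rfl (fun k _ => e k), Finset.sum_neg_distrib, ← Finset.mul_sum,
        Wmat_colsum ht]
  -- the big product
  have hM : Zᵀ * R0⁻¹ * Z = fromBlocks
      (σ2⁻¹ • (Wmat t lam + (σ.permMatrix ℝ)ᵀ * Wmat t lam * σ.permMatrix ℝ)) 0 0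
      ((2 * σ2⁻¹ * (∑ j, uvec t lam j)) • 1) := by
    rw [hZ, hR0inv, fromBlocks_transpose, Matrix.transpose_one, fromBlocks_multiply,
        fromBlocks_multiply]
    simp only [Matrix.mul_zero, Matrix.zero_mul, add_zero, zero_add, Matrix.one_mul,
        Matrix.mul_one]
    have hB11 : σ2⁻¹ • Wmat t lam + (σ.permMatrix ℝ)ᵀ * (σ2⁻¹ • Wmat t lam) * σ.permMatrix ℝ
        = σ2⁻¹ • (Wmat t lam + (σ.permMatrix ℝ)ᵀ * Wmat t lam * σ.permMatrix ℝ) := by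
      rw [Matrix.mul_smul, Matrix.smul_mul, smul_add]
    have hB12 : (σ2⁻¹ • Wmat t lam) * Jm
        + (σ.permMatrix ℝ)ᵀ * (σ2⁻¹ • Wmat t lam) * Km
        = 0 := by
      ext i z
      rw [Matrix.add_apply, Matrix.mul_apply, Matrix.mul_apply, Matrix.zero_apply]
      have e1 : ∀ k, (σ2⁻¹ • Wmat t lam) i k * Jm k z
          = σ2⁻¹ * Wmat t lam i k := by
        intro k; simp [hJm, Matrix.smul_apply, smul_eq_mul]
      have e2 : ∀ k, ((σ.permMatrix ℝ)ᵀ * (σ2⁻¹ • Wmat t lam)) i k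
            * Km k z
          = -(σ2⁻¹ * Wmat t lam (σ⁻¹ i) k) := by
        intro k
        rw [permMatrixT_mul]
        simp [hKm, Matrix.smul_apply, smul_eq_mul]
      rw [Finset.sum_congr rfl (fun k _ => e1 k), Finset.sum_congr rfl (fun k _ => e2 k),
          ← Finset.mul_sum, Finset.sum_neg_distrib, ← Finset.mul_sum,
          Wmat_rowsum ht, Wmat_rowsum ht, huinv]
      ring
    have hB21 : (Jm)ᵀ * (σ2⁻¹ • Wmat t lam)
        + (Km)ᵀ * (σ2⁻¹ • Wmat t lam) * σ.permMatrix ℝ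
        = 0 := by
      ext z j
      rw [Matrix.add_apply, mul_permMatrix, hJWc, hKWc, huinv, Matrix.zero_apply]
      ring
    have hB22 : (Jm)ᵀ * (σ2⁻¹ • Wmat t lam)
          * Jm
        + (Km)ᵀ * (σ2⁻¹ • Wmat t lam)
          * Km
        = (2 * σ2⁻¹ * (∑ j, uvec t lam j)) • (1 : Matrix (Fin 1) (Fin 1) ℝ) := by
      ext z z'
      have hz : z = z' := Subsingleton.elim _ _
      subst hz
      rw [Matrix.add_apply, Matrix.mul_apply, Matrix.mul_apply]
      have e1 : ∀ l, ((Jm)ᵀ * (σ2⁻¹ • Wmat t lam)) z l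
          * Jm l z = σ2⁻¹ * uvec t lam l := by
        intro l; rw [show Jm l z = 1 from by rw [hJm], mul_one, hJWc]
      have e2 : ∀ l, ((Km)ᵀ * (σ2⁻¹ • Wmat t lam)) z l
          * Km l z = σ2⁻¹ * uvec t lam l := by
        intro l
        rw [show Km l z = -1 from by rw [hKm], hKWc]
        ring
      rw [Finset.sum_congr rfl (fun l _ => e1 l), Finset.sum_congr rfl (fun l _ => e2 l),
          ← Finset.mul_sum, Matrix.smul_apply, Matrix.one_apply_eq, smul_eq_mul, mul_one]
      ring
    rw [hB11, hB12, hB21, hB22]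
  -- invert the block-diagonal matrix
  have hNinv : (Zᵀ * R0⁻¹ * Z)⁻¹ = fromBlocks
      (σ2 • (Wmat t lam + (σ.permMatrix ℝ)ᵀ * Wmat t lam * σ.permMatrix ℝ)⁻¹) 0 0
      ((2 * σ2⁻¹ * (∑ j, uvec t lam j))⁻¹ • 1) := by
    apply inv_eq_right_inv
    rw [hM, fromBlocks_multiply]
    simp only [Matrix.mul_zero, Matrix.zero_mul, add_zero, zero_add]
    rw [Matrix.smul_mul, Matrix.mul_smul, smul_smul, inv_mul_cancel₀ (ne_of_gt hσ2), one_smul,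
        hGG, Matrix.smul_mul, Matrix.mul_smul, smul_smul, mul_inv_cancel₀ hd, one_smul,
        Matrix.one_mul]
    exact fromBlocks_one
  rw [hNinv, Matrix.toBlocks_fromBlocks₁₁, hWinv]
end
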